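/- arXiv:2208.09876 — 9 statements merged into one kernel-verified Lean document; each statement's English description precedes it below -/
import Mathlib

section
/- Fix a real λ > 1. If x ∈ [0, 1) satisfies x = exp(λ·(x − 1)), then x < λ⁻². (Consequently, the extinction probability q_λ of a Poisson(λ) Galton–Watson tree, which is the minimal root in [0,1] of x = e^{−λ+λx}, satisfies q_λ < λ⁻².) -/
lemma aux_log_lt (l : ℝ) (hl : 1 < l) : 2 * Real.log l < l - l⁻¹ := by
  have hmono : StrictMonoOn (fun t : ℝ => t - t⁻¹ - 2 * Real.log t) (Set.Ici 1) := by
    apply strictMonoOn_of_deriv_pos (convex_Ici 1)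
    · apply ContinuousOn.sub (ContinuousOn.sub continuousOn_id ?_) ?_
      · exact ContinuousOn.inv₀ continuousOn_id (fun t ht => by
          have : (1:ℝ) ≤ t := ht; positivity)
      · exact ContinuousOn.const_smul (Real.continuousOn_log.mono (fun t ht => by
          have : (1:ℝ) ≤ t := ht
          simp only [Set.mem_compl_iff, Set.mem_singleton_iff]
          intro h; rw [h] at this; linarith)) 2 |>.congr (fun t ht => by simp [smul_eq_mul])
    · intro t ht
      rw [interior_Ici] at ht
      have h1 : (1:ℝ) < t := ht
      have h0 : (0:ℝ) < t := by linarith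
      have hd : HasDerivAt (fun t : ℝ => t - t⁻¹ - 2 * Real.log t)
          (1 - (-(t^2)⁻¹) - 2 * t⁻¹) t :=
        ((hasDerivAt_id t).sub (hasDerivAt_inv h0.ne')).sub
          ((Real.hasDerivAt_log h0.ne').const_mul 2)
      rw [hd.deriv]
      have hu : t⁻¹ < 1 := inv_lt_one_of_one_lt₀ h1
      have hu0 : 0 < t⁻¹ := inv_pos.mpr h0
      have : (t^2)⁻¹ = t⁻¹ * t⁻¹ := by rw [sq, mul_inv]
      nlinarith [sq_nonneg (1 - t⁻¹)]
  have h := hmono (Set.self_mem_Ici) (Set.mem_Ici.mpr hl.le) hl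
  simp only [Real.log_one, inv_one] at h
  linarith

/-- Fix a real `λ > 1`. If `x ∈ [0, 1)` satisfies `x = exp(λ·(x − 1))`, then `x < λ⁻²`.
(Consequently the extinction probability of a Poisson(λ) Galton–Watson tree is less
than `λ⁻²`.) -/
theorem stmt_1 (l : ℝ) (hl : 1 < l) (x : ℝ) (hx0 : 0 ≤ x) (hx1 : x < 1)
    (hfix : x = Real.exp (l * (x - 1))) : x < l⁻¹ ^ 2 := by
  have hl0 : (0:ℝ) < l := by linarith
  set t : ℝ := l⁻¹ ^ 2 with ht_def
  have ht0 : 0 < t := by positivity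
  have hlinv : l⁻¹ < 1 := inv_lt_one_of_one_lt₀ hl
  have ht1 : t < 1 := by
    have : l⁻¹ ^ 2 < 1 ^ 2 := by
      apply pow_lt_pow_left₀ hlinv (by positivity) (by norm_num)
    simpa [ht_def] using this
  -- key: exp(l*(t-1)) < t
  have hkey : Real.exp (l * (t - 1)) < t := by
    have harg : l * (t - 1) = l⁻¹ - l := by
      rw [ht_def, mul_sub, mul_one, sq, ← mul_assoc, mul_inv_cancel₀ hl0.ne', one_mul]
    rw [harg, ← Real.exp_log ht0]
    apply Real.exp_lt_exp.mpr
    have hlog : Real.log t = -(2 * Real.log l) := by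
      rw [ht_def, Real.log_pow, Real.log_inv]
      push_cast
      ring
    rw [hlog]
    have := aux_log_lt l hl
    linarith
  by_contra hcon
  push_neg at hcon  -- t ≤ x
  have h1t : 0 < 1 - t := by linarith
  set a : ℝ := (1 - x) / (1 - t) with ha_def
  set b : ℝ := (x - t) / (1 - t) with hb_def
  have hapos : 0 < a := div_pos (by linarith) h1t
  have ha0 : 0 ≤ a := hapos.le
  have hb0 : 0 ≤ b := div_nonneg (by linarith) h1t.le
  have hab : a + b = 1 := by
    rw [ha_def, hb_def, ← add_div, div_eq_one_iff_eq h1t.ne']; ring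
  have hx_comb : a * t + b * 1 = x := by
    rw [ha_def, hb_def, mul_one, div_mul_eq_mul_div, ← add_div, div_eq_iff h1t.ne']; ring
  have hc := convexOn_exp.2 (Set.mem_univ (l * (t - 1))) (Set.mem_univ 0) ha0 hb0 hab
  simp only [smul_eq_mul, mul_zero, add_zero, Real.exp_zero, mul_one] at hc
  have harg2 : a * (l * (t - 1)) = l * (x - 1) := by
    have : a * (t - 1) = x - 1 := by
      have := hx_comb
      have := hab
      nlinarith
    nlinarith [this]
  rw [harg2] at hc
  -- hc : exp (l*(x-1)) ≤ a * exp (l*(t-1)) + b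
  have hlt : a * Real.exp (l * (t - 1)) < a * t := by
    exact mul_lt_mul_of_pos_left hkey hapos
  rw [← hfix] at hc
  nlinarith
end

section
/- Fix λ > 0 and set μ_k = λ^k e^{−λ}/k! for k ∈ ℕ. There exists M such that for all integers m ≥ M and all integers k with 0 ≤ k ≤ (log m)/(100 log log m), if N and N′ are independent random variables each with the Poisson(m·μ_k) distribution, then P(N = N′) ≤ m^{−1/100}. Equivalently, ∑_{j=0}^∞ ((m μ_k)^j e^{−m μ_k}/j!)² ≤ m^{−1/100}. -/
open Real

noncomputable def pp (μ : ℝ) (j : ℕ) : ℝ := μ ^ j * Real.exp (-μ) / (Nat.factorial j)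

lemma pp_nonneg {μ : ℝ} (hμ : 0 ≤ μ) (j : ℕ) : 0 ≤ pp μ j := by
  unfold pp; positivity

lemma pp_succ {μ : ℝ} (j : ℕ) : pp μ (j+1) = pp μ j * (μ / (j+1)) := by
  unfold pp
  rw [Nat.factorial_succ]
  have h1 : ((j:ℝ)+1) ≠ 0 := by positivity
  have h2 : ((Nat.factorial j : ℝ)) ≠ 0 := by positivity
  push_cast
  field_simp
  ring

lemma pp_mono_up {μ : ℝ} (hμ : 0 ≤ μ) {j : ℕ} (h : (j:ℝ)+1 ≤ μ) : pp μ j ≤ pp μ (j+1) := by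
  rw [pp_succ]
  nth_rewrite 1 [← mul_one (pp μ j)]
  apply mul_le_mul_of_nonneg_left _ (pp_nonneg hμ j)
  rw [le_div_iff₀ (by positivity)]
  linarith

lemma pp_anti {μ : ℝ} (hμ : 0 ≤ μ) {j : ℕ} (h : μ ≤ (j:ℝ)+1) : pp μ (j+1) ≤ pp μ j := by
  rw [pp_succ]
  nth_rewrite 2 [← mul_one (pp μ j)]
  apply mul_le_mul_of_nonneg_left _ (pp_nonneg hμ j)
  rw [div_le_one (by positivity)]
  linarith

/-- antitone after `n = ⌊μ⌋₊` -/
lemma pp_anti_of_le {μ : ℝ} (hμ : 0 ≤ μ) {a b : ℕ} (ha : ⌊μ⌋₊ ≤ a) (hab : a ≤ b) :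
    pp μ b ≤ pp μ a := by
  induction b with
  | zero =>
    have : a = 0 := by omega
    subst this; rfl
  | succ b ih =>
    rcases Nat.lt_or_ge a (b+1) with h | h
    · have hab' : a ≤ b := by omega
      have : pp μ (b+1) ≤ pp μ b := by
        apply pp_anti hμ
        have h1 : μ < ⌊μ⌋₊ + 1 := Nat.lt_floor_add_one μ
        have h2 : (⌊μ⌋₊ : ℝ) ≤ b := by exact_mod_cast le_trans ha hab'
        linarith
      exact le_trans this (ih hab')
    · have : a = b + 1 := by omega
      subst this; rfl

/-- monotone before `n = ⌊μ⌋₊` -/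
lemma pp_mono_of_le {μ : ℝ} (hμ : 0 ≤ μ) {a b : ℕ} (hab : a ≤ b) (hb : b ≤ ⌊μ⌋₊) :
    pp μ a ≤ pp μ b := by
  induction b with
  | zero => have : a = 0 := by omega
            subst this; rfl
  | succ b ih =>
    rcases Nat.lt_or_ge a (b+1) with h | h
    · have hab' : a ≤ b := by omega
      have hb' : b ≤ ⌊μ⌋₊ := by omega
      refine le_trans (ih hab' hb') (pp_mono_up hμ ?_)
      have : ((b:ℕ)+1 : ℝ) ≤ (⌊μ⌋₊ : ℝ) := by exact_mod_cast hb
      have := Nat.floor_le hμ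
      push_cast at *
      linarith
    · have : a = b + 1 := by omega
      subst this; rfl

lemma pp_le_mode {μ : ℝ} (hμ : 0 ≤ μ) (j : ℕ) : pp μ j ≤ pp μ ⌊μ⌋₊ := by
  rcases Nat.lt_or_ge j ⌊μ⌋₊ with h | h
  · exact pp_mono_of_le hμ h.le le_rfl
  · exact pp_anti_of_le hμ le_rfl h

lemma pp_window {μ : ℝ} (hμ : 1 ≤ μ) :
    ∀ t : ℕ, t ≤ ⌈Real.sqrt μ⌉₊ →
      pp μ ⌊μ⌋₊ ≤ ((μ + ⌈Real.sqrt μ⌉₊) / μ) ^ t * pp μ (⌊μ⌋₊ + t) := by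
  have hμ0 : (0:ℝ) < μ := by linarith
  set n := ⌊μ⌋₊
  set T := ⌈Real.sqrt μ⌉₊
  have hfloor : (n : ℝ) ≤ μ := Nat.floor_le hμ0.le
  intro t
  induction t with
  | zero => intro _; simp
  | succ t ih =>
    intro ht
    have key : pp μ (n + t) ≤ ((μ + T)/μ) * pp μ (n + t + 1) := by
      have h1 : pp μ (n+t) = pp μ (n+t+1) * (((n+t:ℕ)+1)/μ) := by
        rw [pp_succ, mul_assoc]
        field_simp
      rw [h1, mul_comm]
      apply mul_le_mul_of_nonneg_right _ (pp_nonneg hμ0.le _)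
      have h2 : ((t:ℝ)+1) ≤ T := by exact_mod_cast ht
      have h3 : ((n + t : ℕ) : ℝ) + 1 ≤ μ + T := by push_cast; linarith
      exact div_le_div_of_nonneg_right h3 hμ0.le
    calc pp μ n ≤ ((μ+T)/μ)^t * pp μ (n+t) := ih (by omega)
      _ ≤ ((μ+T)/μ)^t * (((μ+T)/μ) * pp μ (n+t+1)) := by
          apply mul_le_mul_of_nonneg_left key (by positivity)
      _ = ((μ+T)/μ)^(t+1) * pp μ (n+t+1) := by ring

lemma hasSum_pp {μ : ℝ} (hμ : 0 ≤ μ) : HasSum (pp μ) 1 := by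
  have h := ProbabilityTheory.poissonPMFRealSum ⟨μ, hμ⟩
  convert h using 2 with n
  unfold pp
  show μ ^ n * Real.exp (-μ) / (n.factorial : ℝ) = Real.exp (-μ) * μ ^ n / (n.factorial : ℝ)
  ring

lemma pp_max_le {μ : ℝ} (hμ : 1 ≤ μ) (j : ℕ) : pp μ j ≤ Real.exp 4 / Real.sqrt μ := by
  have hμ0 : (0:ℝ) < μ := by linarith
  set n := ⌊μ⌋₊ with hn
  set T := ⌈Real.sqrt μ⌉₊ with hT
  have hs0 : (0:ℝ) < Real.sqrt μ := Real.sqrt_pos.mpr hμ0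
  have hsT : Real.sqrt μ ≤ T := Nat.le_ceil _
  have hTs : (T:ℝ) < Real.sqrt μ + 1 := Nat.ceil_lt_add_one hs0.le
  have hsle : Real.sqrt μ ≤ μ := (Real.sqrt_le_left hμ0.le).mpr (by nlinarith)
  -- Step C': the ratio power is at most exp 4
  have hpow : ((μ + T) / μ) ^ T ≤ Real.exp 4 := by
    have h1 : (μ + T)/μ = 1 + T/μ := by field_simp
    calc ((μ + T)/μ)^T ≤ (Real.exp (T/μ))^T := by
          apply pow_le_pow_left₀ (by positivity) _ T
          rw [h1, add_comm]; exact Real.add_one_le_exp _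
      _ = Real.exp (T * (T/μ)) := by
          rw [← Real.exp_nat_mul]
      _ ≤ Real.exp 4 := by
          apply Real.exp_le_exp.mpr
          rw [mul_div_assoc'] -- T * T / μ
          rw [div_le_iff₀ hμ0]
          nlinarith [hsT, hTs, Real.sq_sqrt hμ0.le, hsle]
  -- Step D: pp μ (n+T) ≤ 1/(T+1)
  have hsum : ∑ t ∈ Finset.range (T+1), pp μ (n + t) ≤ 1 := by
    have heq : ∑ t ∈ Finset.range (T+1), pp μ (n + t)
        = ∑ j ∈ Finset.Ico n (n + (T+1)), pp μ j := by
      rw [Finset.sum_Ico_eq_sum_range]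
      simp
    rw [heq]
    exact sum_le_hasSum (Finset.Ico n (n + (T+1)))
      (fun j _ => pp_nonneg hμ0.le j) (hasSum_pp hμ0.le)
  have hlow : ((T:ℝ)+1) * pp μ (n+T) ≤ ∑ t ∈ Finset.range (T+1), pp μ (n + t) := by
    have : ∀ t ∈ Finset.range (T+1), pp μ (n+T) ≤ pp μ (n+t) := by
      intro t ht
      exact pp_anti_of_le hμ0.le (Nat.le_add_right n t) (by simp at ht; omega)
    calc ((T:ℝ)+1) * pp μ (n+T) = ∑ _t ∈ Finset.range (T+1), pp μ (n+T) := by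
          rw [Finset.sum_const, Finset.card_range]; ring
      _ ≤ _ := Finset.sum_le_sum this
  have hD : pp μ (n+T) ≤ 1/((T:ℝ)+1) := by
    rw [le_div_iff₀ (by positivity)]
    linarith [hlow.trans hsum]
  -- combine
  have hmode := pp_le_mode hμ0.le j
  have hwin := pp_window hμ T le_rfl
  have h5 : pp μ n ≤ Real.exp 4 * (1/((T:ℝ)+1)) := by
    calc pp μ n ≤ ((μ + T)/μ)^T * pp μ (n+T) := hwin
      _ ≤ Real.exp 4 * (1/((T:ℝ)+1)) := by
          apply mul_le_mul hpow hD (pp_nonneg hμ0.le _) (Real.exp_pos 4).le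
  have h6 : Real.exp 4 * (1/((T:ℝ)+1)) ≤ Real.exp 4 / Real.sqrt μ := by
    rw [mul_one_div]
    apply div_le_div_of_nonneg_left (Real.exp_pos 4).le (by positivity) ?_
    linarith
  exact hmode.trans (h5.trans h6)

lemma collision_le {μ : ℝ} (hμ : 1 ≤ μ) :
    ∑' j : ℕ, (pp μ j)^2 ≤ Real.exp 4 / Real.sqrt μ := by
  have hμ0 : (0:ℝ) ≤ μ := by linarith
  have hs : Summable (pp μ) := (hasSum_pp hμ0).summable
  have hb : ∀ j, (pp μ j)^2 ≤ (Real.exp 4 / Real.sqrt μ) * pp μ j := by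
    intro j
    rw [sq]
    exact mul_le_mul_of_nonneg_right (pp_max_le hμ j) (pp_nonneg hμ0 j)
  have hs2 : Summable (fun j : ℕ => (pp μ j)^2) := by
    apply Summable.of_nonneg_of_le (fun j => sq_nonneg _) hb (hs.mul_left _)
  calc ∑' j : ℕ, (pp μ j)^2 ≤ ∑' j : ℕ, (Real.exp 4 / Real.sqrt μ) * pp μ j :=
        Summable.tsum_le_tsum hb hs2 (hs.mul_left _)
    _ = (Real.exp 4 / Real.sqrt μ) * 1 := by rw [tsum_mul_left, (hasSum_pp hμ0).tsum_eq]
    _ = Real.exp 4 / Real.sqrt μ := mul_one _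

/-- Fix `λ > 0` and set `μ_k = λ^k e^{−λ}/k!`. There exists `M` such that for all
integers `m ≥ M` and all `k` with `0 ≤ k ≤ log m / (100 log log m)`, the collision
probability of two independent Poisson(`m·μ_k`) variables, namely
`∑_{j} ((m μ_k)^j e^{−m μ_k}/j!)²`, is at most `m^{−1/100}`. -/
theorem stmt_4 (l : ℝ) (hl : 0 < l) :
    ∃ M : ℕ, ∀ m : ℕ, M ≤ m → ∀ k : ℕ,
      (k : ℝ) ≤ Real.log m / (100 * Real.log (Real.log m)) →
      (∑' j : ℕ,
          (((m : ℝ) * (l ^ k * Real.exp (-l) / (Nat.factorial k))) ^ j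
              * Real.exp (-((m : ℝ) * (l ^ k * Real.exp (-l) / (Nat.factorial k))))
              / (Nat.factorial j)) ^ 2)
        ≤ (m : ℝ) ^ (-(1 / 100 : ℝ)) := by
  have hL : Filter.Tendsto (fun m : ℕ => Real.log m) Filter.atTop Filter.atTop :=
    Real.tendsto_log_atTop.comp tendsto_natCast_atTop_atTop
  have hLL : Filter.Tendsto (fun m : ℕ => Real.log (Real.log m)) Filter.atTop Filter.atTop :=
    Real.tendsto_log_atTop.comp hL
  have e1 := hLL.eventually_ge_atTop (max 1 |Real.log l|)
  have e2 := hL.eventually_ge_atTop (50 * (8 + l))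
  have e3 : ∀ᶠ m : ℕ in Filter.atTop, 1 ≤ m := Filter.eventually_ge_atTop 1
  obtain ⟨M, hM⟩ := Filter.eventually_atTop.mp ((e1.and e2).and e3)
  refine ⟨M, fun m hm k hk => ?_⟩
  obtain ⟨⟨h1, h2⟩, h3⟩ := hM m hm
  set L := Real.log (Real.log m) with hLdef
  have hL1 : (1:ℝ) ≤ L := le_trans (le_max_left _ _) h1
  have hLl : |Real.log l| ≤ L := le_trans (le_max_right _ _) h1
  have hL0 : (0:ℝ) < L := by linarith
  have hlogm : 50 * (8 + l) ≤ Real.log m := h2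
  have hlogm0 : (0:ℝ) ≤ Real.log m := by linarith
  have hm1 : (1:ℝ) ≤ m := by exact_mod_cast h3
  have hm0 : (0:ℝ) < m := by linarith
  set μk := l ^ k * Real.exp (-l) / (Nat.factorial k) with hμkdef
  have hμk0 : 0 < μk := by
    have : (0:ℝ) < Nat.factorial k := by exact_mod_cast k.factorial_pos
    positivity
  set μ := (m:ℝ) * μk with hμdef
  have hμ0 : 0 < μ := by positivity
  -- k * L ≤ log m / 100
  have hkL : (k:ℝ) * L ≤ Real.log m / 100 := by
    have h4 := mul_le_mul_of_nonneg_right hk hL0.le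
    have h5 : Real.log m / (100 * L) * L = Real.log m / 100 := by
      field_simp
    rw [h5] at h4
    exact h4
  have hk0 : (0:ℝ) ≤ k := Nat.cast_nonneg k
  -- log k! ≤ k * L
  have hlogfact : Real.log (Nat.factorial k) ≤ (k:ℝ) * L := by
    rcases Nat.eq_zero_or_pos k with hk' | hk'
    · subst hk'; simp
    · have hkm : (k:ℝ) ≤ Real.log m := by
        refine le_trans hk ?_
        apply div_le_self hlogm0
        linarith
      have hk1 : (1:ℝ) ≤ k := by exact_mod_cast hk'
      have hfl : ((Nat.factorial k : ℕ):ℝ) ≤ (k:ℝ) ^ k := by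
        exact_mod_cast Nat.factorial_le_pow k
      have hlk : Real.log k ≤ L := by
        rw [hLdef]
        exact Real.log_le_log (by linarith) hkm
      calc Real.log (Nat.factorial k) ≤ Real.log ((k:ℝ)^k) := by
            apply Real.log_le_log (by exact_mod_cast k.factorial_pos) hfl
        _ = (k:ℝ) * Real.log k := by rw [Real.log_pow]
        _ ≤ (k:ℝ) * L := by
            apply mul_le_mul_of_nonneg_left hlk hk0
  -- |k log l| ≤ k L
  have hkll : |(k:ℝ) * Real.log l| ≤ (k:ℝ) * L := by
    rw [abs_mul, Nat.abs_cast]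
    exact mul_le_mul_of_nonneg_left (le_trans hLl le_rfl) hk0
  -- log μ
  have hlogμ : Real.log μ = Real.log m + ((k:ℝ) * Real.log l - l - Real.log (Nat.factorial k)) := by
    rw [hμdef, Real.log_mul (by positivity) (by positivity), hμkdef,
      Real.log_div (by positivity) (by positivity),
      Real.log_mul (by positivity) (by positivity),
      Real.log_pow, Real.log_exp]
    ring
  have hkabs : -((k:ℝ) * L) ≤ (k:ℝ) * Real.log l := by
    have := neg_abs_le ((k:ℝ) * Real.log l)
    linarith [hkll]
  have key : (98/100) * Real.log m - l ≤ Real.log μ := by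
    rw [hlogμ]
    linarith [hkL, hlogfact, hkabs]
  have hμ1 : (1:ℝ) ≤ μ := by
    have h0 : (0:ℝ) ≤ Real.log μ := by nlinarith
    nlinarith [Real.exp_log hμ0, Real.exp_le_exp.mpr h0, Real.exp_zero,
      Real.one_le_exp h0]
  have hcol := collision_le hμ1
  have hsqrt : Real.sqrt μ = Real.exp (Real.log μ / 2) := by
    rw [Real.sqrt_eq_rpow, Real.rpow_def_of_pos hμ0]
    ring_nf
  have hrpow : (m:ℝ) ^ (-(1/100 : ℝ)) = Real.exp (Real.log m * (-(1/100))) :=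
    Real.rpow_def_of_pos hm0 _
  have hfinal : Real.exp 4 / Real.sqrt μ ≤ (m:ℝ) ^ (-(1/100 : ℝ)) := by
    rw [hsqrt, hrpow, ← Real.exp_sub]
    apply Real.exp_le_exp.mpr
    nlinarith [key, hlogm]
  refine le_trans ?_ (le_trans hcol hfinal)
  apply le_of_eq
  rfl
end

section
/- Fix λ > 1 and let (Z_ℓ)_{ℓ≥0} be a Galton–Watson process with Poisson(λ) offspring distribution. Then for every integer m ≥ 1 there is a constant C_{m,λ} > 0 such that E[Z_ℓ^m] ≤ C_{m,λ} · λ^{ℓ m} for all integers ℓ ≥ 1. -/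
open Finset MeasureTheory ProbabilityTheory
open scoped ENNReal
set_option linter.unusedSectionVars false
namespace GWaux

/-- Stirling numbers of the second kind (ad hoc). -/
def St : ℕ → ℕ → ℕ
  | 0, 0 => 1
  | 0, _+1 => 0
  | _+1, 0 => 0
  | m+1, j+1 => St m j + (j+1) * St m (j+1)

lemma St_gt : ∀ m j, m < j → St m j = 0
  | 0, j+1, _ => rfl
  | m+1, j+1, h => by
      rw [St, St_gt m j (by omega), St_gt m (j+1) (by omega)]; ring
lemma St_self : ∀ m, St m m = 1
  | 0 => rfl
  | m+1 => by rw [St, St_self m, St_gt m (m+1) (Nat.lt_succ_self m)]; ring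

lemma mul_descFactorial (k j : ℕ) :
    k * k.descFactorial j = k.descFactorial (j+1) + j * k.descFactorial j := by
  rcases lt_or_ge k j with h | h
  · rw [Nat.descFactorial_eq_zero_iff_lt.2 h, Nat.descFactorial_eq_zero_iff_lt.2 (by omega)]
    ring
  · rw [Nat.descFactorial_succ]
    have : k - j + j = k := by omega
    nlinarith [Nat.sub_add_cancel h]

lemma pow_eq_sum_St (k : ℕ) : ∀ m, k ^ m = ∑ j ∈ range (m+1), St m j * k.descFactorial j
  | 0 => by simp [St]
  | m+1 => by
    have H := pow_eq_sum_St k m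
    have : k ^ (m+1) = ∑ j ∈ range (m+1), St m j * (k * k.descFactorial j) := by
      rw [pow_succ, H, Finset.sum_mul]; congr 1; ext j; ring
    rw [this]
    have h1 : ∀ j, St m j * (k * k.descFactorial j)
        = St m j * k.descFactorial (j+1) + j * St m j * k.descFactorial j := by
      intro j; rw [mul_descFactorial]; ring
    rw [Finset.sum_congr rfl fun j _ => h1 j, Finset.sum_add_distrib]
    -- target: = ∑ j ∈ range (m+2), St (m+1) j * k.descFactorial j
    rw [Finset.sum_range_succ' (fun j => St (m+1) j * k.descFactorial j) (m+1)]
    have hz : St (m+1) 0 * k.descFactorial 0 = 0 := by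
      cases m <;> simp [St]
    rw [hz, add_zero]
    have h2 : ∀ j ∈ range (m+1), St (m+1) (j+1) * k.descFactorial (j+1)
        = St m j * k.descFactorial (j+1) + (j+1) * St m (j+1) * k.descFactorial (j+1) := by
      intro j _; rw [St]; ring
    rw [Finset.sum_congr rfl h2, Finset.sum_add_distrib]
    congr 1
    -- ∑ j ∈ range (m+1), j * St m j * k.descFactorial j
    --   = ∑ j ∈ range (m+1), (j+1) * St m (j+1) * k.descFactorial (j+1)
    rw [Finset.sum_range_succ' (fun j => j * St m j * k.descFactorial j) m]
    simp only [Nat.zero_eq, zero_mul, add_zero]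
    rw [Finset.sum_range_succ (fun j => (j+1) * St m (j+1) * k.descFactorial (j+1)) m]
    rw [St_gt m (m+1) (Nat.lt_succ_self m)]
    ring_nf

lemma descFactorial_add_mul : ∀ (j i : ℕ), (i + j).descFactorial j * i.factorial = (i + j).factorial
  | 0, i => by simp
  | j+1, i => by
    have : i + (j+1) = (i + j) + 1 := by omega
    rw [this, Nat.succ_descFactorial_succ, Nat.factorial_succ, mul_assoc,
      descFactorial_add_mul j i]

noncomputable def pois (μ : ℝ) (k : ℕ) : ℝ≥0∞ :=
  ENNReal.ofReal (μ ^ k * Real.exp (-μ) / (Nat.factorial k))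

lemma pois_sum (μ : ℝ) (hμ : 0 ≤ μ) : ∑' k, pois μ k = 1 := by
  have h := (poissonPMF μ.toNNReal).tsum_coe
  have he : ∀ k, pois μ k = poissonPMF μ.toNNReal k := by
    intro k
    show _ = ENNReal.ofReal (poissonPMFReal μ.toNNReal k)
    unfold poissonPMFReal
    rw [Real.coe_toNNReal μ hμ]
    unfold pois
    ring_nf
  rw [tsum_congr he, h]

lemma pois_conv (a b : ℝ) (ha : 0 ≤ a) (hb : 0 ≤ b) (k : ℕ) :
    ∑ j ∈ range (k+1), pois a j * pois b (k-j) = pois (a+b) k := by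
  unfold pois
  have hnn : ∀ j (μ:ℝ), 0 ≤ μ → 0 ≤ μ ^ j * Real.exp (-μ) / (Nat.factorial j) := by
    intro j μ hμ
    positivity
  have h1 : ∀ j ∈ range (k+1),
      ENNReal.ofReal (a ^ j * Real.exp (-a) / (Nat.factorial j)) *
        ENNReal.ofReal (b ^ (k-j) * Real.exp (-b) / (Nat.factorial (k-j)))
      = ENNReal.ofReal ((a ^ j * Real.exp (-a) / (Nat.factorial j)) *
          (b ^ (k-j) * Real.exp (-b) / (Nat.factorial (k-j)))) := by
    intro j _
    rw [ENNReal.ofReal_mul (hnn j a ha)]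
  rw [Finset.sum_congr rfl h1, ← ENNReal.ofReal_sum_of_nonneg (fun j _ =>
    mul_nonneg (hnn j a ha) (hnn (k-j) b hb))]
  congr 1
  have key : ∀ j ∈ range (k+1),
      (a ^ j * Real.exp (-a) / (Nat.factorial j)) *
        (b ^ (k-j) * Real.exp (-b) / (Nat.factorial (k-j)))
      = (a ^ j * b ^ (k-j) * (k.choose j)) * Real.exp (-(a+b)) / (Nat.factorial k) := by
    intro j hj
    have hjk : j ≤ k := by simpa using Nat.lt_succ_iff.1 (Finset.mem_range.1 hj)
    have hfac : (k.choose j : ℝ) * (Nat.factorial j) * (Nat.factorial (k-j)) = Nat.factorial k := by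
      exact_mod_cast congrArg (Nat.cast (R := ℝ)) (Nat.choose_mul_factorial_mul_factorial hjk)
    have hj0 : (Nat.factorial j : ℝ) ≠ 0 := Nat.cast_ne_zero.2 (Nat.factorial_ne_zero j)
    have hkj0 : (Nat.factorial (k-j) : ℝ) ≠ 0 := Nat.cast_ne_zero.2 (Nat.factorial_ne_zero (k-j))
    have hk0 : (Nat.factorial k : ℝ) ≠ 0 := Nat.cast_ne_zero.2 (Nat.factorial_ne_zero k)
    have hc0 : (k.choose j : ℝ) ≠ 0 := Nat.cast_ne_zero.2 (Nat.choose_pos hjk).ne'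
    rw [Real.exp_neg, Real.exp_neg, Real.exp_neg, Real.exp_add, ← hfac]
    field_simp
  rw [Finset.sum_congr rfl key]
  rw [← Finset.sum_div, ← Finset.sum_mul, ← add_pow]

lemma pois_descMoment (μ : ℝ) (hμ : 0 ≤ μ) (j : ℕ) :
    ∑' k, (Nat.descFactorial k j : ℝ≥0∞) * pois μ k = ENNReal.ofReal (μ ^ j) := by
  have hinj : Function.Injective (fun i : ℕ => i + j) := add_left_injective j
  have hsupp : Function.support (fun k => (Nat.descFactorial k j : ℝ≥0∞) * pois μ k)
      ⊆ Set.range (fun i : ℕ => i + j) := by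
    intro k hk
    by_contra hr
    have hkj : k < j := by
      rcases le_or_gt j k with h | h
      · exact absurd ⟨k - j, show (k - j) + j = k by omega⟩ hr
      · exact h
    apply hk
    simp [Nat.descFactorial_eq_zero_iff_lt.2 hkj]
  rw [← hinj.tsum_eq hsupp]
  have he : ∀ i : ℕ, (Nat.descFactorial (i+j) j : ℝ≥0∞) * pois μ (i+j)
      = ENNReal.ofReal (μ ^ j) * pois μ i := by
    intro i
    unfold pois
    rw [← ENNReal.ofReal_natCast, ← ENNReal.ofReal_mul (by positivity),
      ← ENNReal.ofReal_mul (by positivity)]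
    congr 1
    have hfac : ((i+j).descFactorial j : ℝ) * (Nat.factorial i) = Nat.factorial (i+j) := by
      exact_mod_cast congrArg (Nat.cast (R := ℝ)) (descFactorial_add_mul j i)
    have hi0 : (Nat.factorial i : ℝ) ≠ 0 := Nat.cast_ne_zero.2 (Nat.factorial_ne_zero i)
    have hij0 : (Nat.factorial (i+j) : ℝ) ≠ 0 := Nat.cast_ne_zero.2 (Nat.factorial_ne_zero (i+j))
    rw [← hfac]
    field_simp
    rw [pow_add]
    ring
  rw [tsum_congr he, ENNReal.tsum_mul_left, pois_sum μ hμ, mul_one]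

lemma moment_pois (μ : ℝ) (hμ : 0 ≤ μ) (m : ℕ) :
    ∑' k : ℕ, (k : ℝ≥0∞) ^ m * pois μ k
      = ∑ j ∈ range (m+1), (St m j : ℝ≥0∞) * (ENNReal.ofReal μ) ^ j := by
  have h1 : ∀ k : ℕ, (k : ℝ≥0∞) ^ m * pois μ k
      = ∑ j ∈ range (m+1), (St m j : ℝ≥0∞) * ((Nat.descFactorial k j : ℝ≥0∞) * pois μ k) := by
    intro k
    have : (k : ℝ≥0∞) ^ m = ((k ^ m : ℕ) : ℝ≥0∞) := by push_cast; ring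
    rw [this, pow_eq_sum_St k m]
    push_cast
    rw [Finset.sum_mul]
    congr 1; ext j; ring
  rw [tsum_congr h1, Summable.tsum_finsetSum (fun j _ => ENNReal.summable)]
  congr 1; ext j
  rw [ENNReal.tsum_mul_left, pois_descMoment μ hμ j, ENNReal.ofReal_pow hμ]

lemma moment_pois_le (μ : ℝ) (hμ : 1 ≤ μ) (m : ℕ) (hm : 1 ≤ m) :
    ∑' k : ℕ, (k : ℝ≥0∞) ^ m * pois μ k
      ≤ (ENNReal.ofReal μ) ^ m + (∑ j ∈ range m, (St m j : ℕ) : ℝ≥0∞) * (ENNReal.ofReal μ) ^ (m-1) := by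
  rw [moment_pois μ (by linarith) m, Finset.sum_range_succ, St_self m]
  have hL : 1 ≤ ENNReal.ofReal μ := by
    rw [← ENNReal.ofReal_one]
    exact ENNReal.ofReal_le_ofReal hμ
  rw [add_comm]
  gcongr ?_ + ?_
  · simp
  · calc ∑ j ∈ range m, (St m j : ℝ≥0∞) * (ENNReal.ofReal μ) ^ j
        ≤ ∑ j ∈ range m, (St m j : ℝ≥0∞) * (ENNReal.ofReal μ) ^ (m-1) := by
          apply Finset.sum_le_sum
          intro j hj
          have hjm : j ≤ m - 1 := by have := Finset.mem_range.1 hj; omega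
          gcongr
      _ = (∑ j ∈ range m, (St m j : ℕ) : ℝ≥0∞) * (ENNReal.ofReal μ) ^ (m-1) := by
          rw [← Finset.sum_mul]

section Prob
variable {Ω : Type} {mΩ : MeasurableSpace Ω} (P : Measure Ω) [IsProbabilityMeasure P]

lemma conv_nat (X Y : Ω → ℕ) (hX : Measurable X) (hY : Measurable Y)
    (h : IndepFun X Y P) (k : ℕ) :
    P {ω | X ω + Y ω = k} = ∑ j ∈ range (k+1), P {ω | X ω = j} * P {ω | Y ω = k - j} := by
  have hset : {ω | X ω + Y ω = k}
      = ⋃ j ∈ Finset.range (k+1), ({ω | X ω = j} ∩ {ω | Y ω = k - j}) := by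
    ext ω
    simp only [Set.mem_setOf_eq, Set.mem_iUnion, Set.mem_inter_iff, Finset.mem_range,
      Finset.mem_coe]
    constructor
    · intro hs; exact ⟨X ω, by omega, rfl, by omega⟩
    · rintro ⟨j, hj, h1, h2⟩; omega
  rw [hset, measure_biUnion_finset]
  · refine Finset.sum_congr rfl fun j hj => ?_
    have := h.measure_inter_preimage_eq_mul (s := {j}) (t := {k - j})
      (measurableSet_singleton _) (measurableSet_singleton _)
    simpa [Set.preimage, Set.mem_singleton_iff] using this
  · intro a _ b _ hab
    rw [Function.onFun, Set.disjoint_left]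
    rintro ω ⟨h1, _⟩ ⟨h3, _⟩
    exact hab (h1 ▸ h3 ▸ rfl)
  · intro j _
    exact (hX (measurableSet_singleton j)).inter (hY (measurableSet_singleton _))

variable (ξ : ℕ → ℕ → Ω → ℕ) (Z : ℕ → Ω → ℕ)

/-- partial row sums -/
def Srow (ℓ n : ℕ) (ω : Ω) : ℕ := ∑ i ∈ Finset.range n, ξ ℓ i ω

lemma measurable_Srow {m : MeasurableSpace Ω} {ℓ n : ℕ}
    (h : ∀ i, Measurable[m] (ξ ℓ i)) : Measurable[m] (Srow ξ ℓ n) :=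
  Finset.measurable_sum _ (fun i _ => h i)

lemma indepFun_Srow (hmeas : ∀ ℓ i, Measurable (ξ ℓ i))
    (hindep : iIndepFun (fun q : ℕ × ℕ => ξ q.1 q.2) P)
    (ℓ n : ℕ) : IndepFun (Srow ξ ℓ n) (ξ ℓ n) P := by
  have hi : (ℓ, n) ∉ (Finset.range n).image (fun i => (ℓ, i)) := by
    simp
  have h := hindep.indepFun_finsetSum_of_notMem (fun q => hmeas q.1 q.2) hi
  have he : (∑ j ∈ (Finset.range n).image (fun i => (ℓ, i)),
      (fun q : ℕ × ℕ => ξ q.1 q.2) j) = Srow ξ ℓ n := by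
    funext ω
    rw [Finset.sum_apply]
    rw [Finset.sum_image (fun i _ j _ h => by simpa using h)]
    rfl
  rwa [he] at h

lemma Srow_dist (l : ℝ) (hl : 0 ≤ l)
    (hmeas : ∀ ℓ i, Measurable (ξ ℓ i))
    (hindep : iIndepFun (fun q : ℕ × ℕ => ξ q.1 q.2) P)
    (hpois : ∀ ℓ i k, P {ω | ξ ℓ i ω = k}
      = ENNReal.ofReal (l ^ k * Real.exp (-l) / (Nat.factorial k)))
    (ℓ : ℕ) : ∀ n k, P {ω | Srow ξ ℓ n ω = k} = pois ((n : ℝ) * l) k := by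
  intro n
  induction n with
  | zero =>
    intro k
    have h0 : ∀ ω : Ω, Srow ξ ℓ 0 ω = 0 := fun ω => rfl
    cases k with
    | zero =>
      have : {ω : Ω | Srow ξ ℓ 0 ω = 0} = Set.univ := by
        ext ω; simp [h0]
      rw [this, measure_univ]
      norm_num [pois]
    | succ k =>
      have : {ω : Ω | Srow ξ ℓ 0 ω = k + 1} = ∅ := by
        ext ω; simp [h0]
      rw [this, measure_empty]
      norm_num [pois]
  | succ n ih =>
    intro k
    have hsucc : ∀ ω : Ω, Srow ξ ℓ (n+1) ω = Srow ξ ℓ n ω + ξ ℓ n ω := by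
      intro ω; exact Finset.sum_range_succ _ n
    have : {ω : Ω | Srow ξ ℓ (n+1) ω = k} = {ω | Srow ξ ℓ n ω + ξ ℓ n ω = k} := by
      ext ω; simp [hsucc]
    rw [this, conv_nat P _ _ (measurable_Srow ξ (fun i => hmeas ℓ i)) (hmeas ℓ n)
      (indepFun_Srow P ξ hmeas hindep ℓ n)]
    have he : ∀ j ∈ Finset.range (k+1),
        P {ω | Srow ξ ℓ n ω = j} * P {ω | ξ ℓ n ω = k - j}
          = pois ((n : ℝ) * l) j * pois l (k - j) := by
      intro j _
      rw [ih j, hpois ℓ n (k - j)]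
      rfl
    rw [Finset.sum_congr rfl he, pois_conv _ _ (by positivity) hl k]
    congr 1
    push_cast
    ring

/-- σ-algebra generated by one entry of the array. -/
def mrow (q : ℕ × ℕ) : MeasurableSpace Ω :=
  MeasurableSpace.comap (fun ω => ξ q.1 q.2 ω) inferInstance

/-- σ-algebra generated by rows `< ℓ`. -/
def Mpast (ℓ : ℕ) : MeasurableSpace Ω := ⨆ q ∈ {q : ℕ × ℕ | q.1 < ℓ}, mrow ξ q

/-- σ-algebra generated by row `ℓ`. -/
def Mrow (ℓ : ℕ) : MeasurableSpace Ω := ⨆ q ∈ {q : ℕ × ℕ | q.1 = ℓ}, mrow ξ q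

lemma measurable_xi_mrow (ℓ i : ℕ) : Measurable[mrow ξ (ℓ, i)] (ξ ℓ i) :=
  Measurable.of_comap_le le_rfl

lemma measurable_xi_Mrow (ℓ i : ℕ) : Measurable[Mrow ξ ℓ] (ξ ℓ i) :=
  (measurable_xi_mrow ξ ℓ i).mono
    (le_iSup₂ (f := fun q (_ : q ∈ {q : ℕ × ℕ | q.1 = ℓ}) => mrow ξ q) (ℓ, i) rfl) le_rfl

lemma measurable_xi_Mpast {ℓ ℓ' i : ℕ} (h : ℓ' < ℓ) : Measurable[Mpast ξ ℓ] (ξ ℓ' i) :=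
  (measurable_xi_mrow ξ ℓ' i).mono
    (le_iSup₂ (f := fun q (_ : q ∈ {q : ℕ × ℕ | q.1 < ℓ}) => mrow ξ q) (ℓ', i) h) le_rfl

lemma Mpast_mono {ℓ ℓ' : ℕ} (h : ℓ ≤ ℓ') : Mpast ξ ℓ ≤ Mpast ξ ℓ' := by
  apply iSup₂_le
  intro q hq
  exact le_iSup₂ (f := fun q (_ : q ∈ {q : ℕ × ℕ | q.1 < ℓ'}) => mrow ξ q) q
    (lt_of_lt_of_le hq h)

lemma Mpast_le (hmeas : ∀ ℓ i, Measurable (ξ ℓ i)) (ℓ : ℕ) : Mpast ξ ℓ ≤ mΩ :=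
  iSup₂_le fun q _ => (hmeas q.1 q.2).comap_le

lemma Z_succ_set (hZrec : ∀ ℓ ω, Z (ℓ + 1) ω = ∑ i ∈ Finset.range (Z ℓ ω), ξ ℓ i ω)
    (ℓ k : ℕ) :
    {ω | Z (ℓ+1) ω = k} = ⋃ n, ({ω | Z ℓ ω = n} ∩ {ω | Srow ξ ℓ n ω = k}) := by
  ext ω
  simp only [Set.mem_setOf_eq, Set.mem_iUnion, Set.mem_inter_iff]
  constructor
  · intro h
    exact ⟨Z ℓ ω, rfl, by rw [← h, hZrec ℓ ω]; rfl⟩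
  · rintro ⟨n, h1, h2⟩
    rw [hZrec ℓ ω, ← h2]
    unfold Srow
    rw [h1]

lemma measurable_Z_Mpast
    (hZ0 : ∀ ω, Z 0 ω = 1)
    (hZrec : ∀ ℓ ω, Z (ℓ + 1) ω = ∑ i ∈ Finset.range (Z ℓ ω), ξ ℓ i ω) :
    ∀ ℓ, Measurable[Mpast ξ ℓ] (Z ℓ) := by
  intro ℓ
  induction ℓ with
  | zero =>
    have : Z 0 = fun _ => 1 := funext hZ0
    rw [this]
    exact measurable_const
  | succ ℓ ih =>
    refine @measurable_to_countable' ℕ Ω _ _ (Mpast ξ (ℓ+1)) _ fun k => ?_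
    have hset := Z_succ_set ξ Z hZrec ℓ k
    rw [show (Z (ℓ+1) ⁻¹' {k}) = {ω | Z (ℓ+1) ω = k} from rfl, hset]
    apply MeasurableSet.iUnion
    intro n
    apply MeasurableSet.inter
    · exact (ih.mono (Mpast_mono ξ (Nat.le_succ ℓ)) le_rfl) (measurableSet_singleton n)
    · have hS : Measurable[Mpast ξ (ℓ+1)] (Srow ξ ℓ n) :=
        measurable_Srow ξ (fun i => measurable_xi_Mpast ξ (Nat.lt_succ_self ℓ))
      exact hS (measurableSet_singleton k)

lemma measurable_Z (hmeas : ∀ ℓ i, Measurable (ξ ℓ i))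
    (hZ0 : ∀ ω, Z 0 ω = 1)
    (hZrec : ∀ ℓ ω, Z (ℓ + 1) ω = ∑ i ∈ Finset.range (Z ℓ ω), ξ ℓ i ω) (ℓ : ℕ) :
    Measurable (Z ℓ) :=
  (measurable_Z_Mpast ξ Z hZ0 hZrec ℓ).mono (Mpast_le ξ hmeas ℓ) le_rfl

lemma indep_Mpast_Mrow (hmeas : ∀ ℓ i, Measurable (ξ ℓ i))
    (hindep : iIndepFun (fun q : ℕ × ℕ => ξ q.1 q.2) P)
    (ℓ : ℕ) : Indep (Mpast ξ ℓ) (Mrow ξ ℓ) P := by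
  refine indep_iSup_of_disjoint (m := mrow ξ) (fun q => (hmeas q.1 q.2).comap_le)
    ((iIndepFun_iff_iIndep _ _ _).1 hindep) ?_
  · rw [Set.disjoint_left]
    intro q hq hq'
    simp only [Set.mem_setOf_eq] at hq hq'
    omega

lemma prod_ZS (hmeas : ∀ ℓ i, Measurable (ξ ℓ i))
    (hindep : iIndepFun (fun q : ℕ × ℕ => ξ q.1 q.2) P)
    (hZ0 : ∀ ω, Z 0 ω = 1)
    (hZrec : ∀ ℓ ω, Z (ℓ + 1) ω = ∑ i ∈ Finset.range (Z ℓ ω), ξ ℓ i ω)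
    (ℓ n k : ℕ) :
    P ({ω | Z ℓ ω = n} ∩ {ω | Srow ξ ℓ n ω = k})
      = P {ω | Z ℓ ω = n} * P {ω | Srow ξ ℓ n ω = k} := by
  refine (Indep_iff _ _ _).1 (indep_Mpast_Mrow P ξ hmeas hindep ℓ) _ _ ?_ ?_
  · exact (measurable_Z_Mpast ξ Z hZ0 hZrec ℓ) (measurableSet_singleton n)
  · exact (measurable_Srow ξ (fun i => measurable_xi_Mrow ξ ℓ i)) (measurableSet_singleton k)

lemma Z_dist_rec (l : ℝ) (hl : 0 ≤ l)
    (hmeas : ∀ ℓ i, Measurable (ξ ℓ i))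
    (hindep : iIndepFun (fun q : ℕ × ℕ => ξ q.1 q.2) P)
    (hpois : ∀ ℓ i k, P {ω | ξ ℓ i ω = k}
      = ENNReal.ofReal (l ^ k * Real.exp (-l) / (Nat.factorial k)))
    (hZ0 : ∀ ω, Z 0 ω = 1)
    (hZrec : ∀ ℓ ω, Z (ℓ + 1) ω = ∑ i ∈ Finset.range (Z ℓ ω), ξ ℓ i ω)
    (ℓ k : ℕ) :
    P {ω | Z (ℓ+1) ω = k} = ∑' n : ℕ, P {ω | Z ℓ ω = n} * pois ((n : ℝ) * l) k := by
  rw [Z_succ_set ξ Z hZrec ℓ k, measure_iUnion]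
  · refine tsum_congr fun n => ?_
    rw [prod_ZS P ξ Z hmeas hindep hZ0 hZrec ℓ n k,
      Srow_dist P ξ l hl hmeas hindep hpois ℓ n k]
  · intro a b hab
    rw [Function.onFun, Set.disjoint_left]
    rintro ω ⟨h1, _⟩ ⟨h3, _⟩
    exact hab (h1 ▸ h3 ▸ rfl)
  · intro n
    apply MeasurableSet.inter
    · exact measurable_Z ξ Z hmeas hZ0 hZrec ℓ (measurableSet_singleton n)
    · exact measurable_Srow ξ (fun i => hmeas ℓ i) (measurableSet_singleton k)

lemma lintegral_nat_comp (f : Ω → ℕ) (hf : Measurable f) (g : ℕ → ℝ≥0∞) :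
    ∫⁻ ω, g (f ω) ∂P = ∑' k, g k * P {ω | f ω = k} := by
  rw [← lintegral_map (f := g) (Measurable.of_discrete) hf, lintegral_countable']
  refine tsum_congr fun k => ?_
  rw [Measure.map_apply hf (measurableSet_singleton k)]
  rfl

lemma Z_partition (hmeas : ∀ ℓ i, Measurable (ξ ℓ i))
    (hZ0 : ∀ ω, Z 0 ω = 1)
    (hZrec : ∀ ℓ ω, Z (ℓ + 1) ω = ∑ i ∈ Finset.range (Z ℓ ω), ξ ℓ i ω) (ℓ : ℕ) :
    ∑' n : ℕ, P {ω | Z ℓ ω = n} = 1 := by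
  rw [← measure_iUnion]
  · have : ⋃ n : ℕ, {ω | Z ℓ ω = n} = Set.univ := by
      ext ω; simp
    rw [this, measure_univ]
  · intro a b hab
    rw [Function.onFun, Set.disjoint_left]
    rintro ω h1 h3
    exact hab ((Set.mem_setOf_eq ▸ h1) ▸ (Set.mem_setOf_eq ▸ h3) ▸ rfl)
  · intro n
    exact measurable_Z ξ Z hmeas hZ0 hZrec ℓ (measurableSet_singleton n)

lemma moment_rec (l : ℝ) (hl : 1 ≤ l)
    (hmeas : ∀ ℓ i, Measurable (ξ ℓ i))
    (hindep : iIndepFun (fun q : ℕ × ℕ => ξ q.1 q.2) P)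
    (hpois : ∀ ℓ i k, P {ω | ξ ℓ i ω = k}
      = ENNReal.ofReal (l ^ k * Real.exp (-l) / (Nat.factorial k)))
    (hZ0 : ∀ ω, Z 0 ω = 1)
    (hZrec : ∀ ℓ ω, Z (ℓ + 1) ω = ∑ i ∈ Finset.range (Z ℓ ω), ξ ℓ i ω)
    (m ℓ : ℕ) (hm : 1 ≤ m) :
    ∑' k : ℕ, (k : ℝ≥0∞) ^ m * P {ω | Z (ℓ+1) ω = k}
      ≤ (ENNReal.ofReal l) ^ m * ∑' n : ℕ, (n : ℝ≥0∞) ^ m * P {ω | Z ℓ ω = n}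
        + (∑ j ∈ range m, (St m j : ℕ) : ℝ≥0∞) * (ENNReal.ofReal l) ^ (m-1)
          * ∑' n : ℕ, (n : ℝ≥0∞) ^ (m-1) * P {ω | Z ℓ ω = n} := by
  set L := ENNReal.ofReal l with hLdef
  set B := (∑ j ∈ range m, (St m j : ℕ) : ℝ≥0∞) with hBdef
  have step1 : ∑' k : ℕ, (k : ℝ≥0∞) ^ m * P {ω | Z (ℓ+1) ω = k}
      = ∑' n : ℕ, P {ω | Z ℓ ω = n} * ∑' k : ℕ, (k : ℝ≥0∞) ^ m * pois ((n:ℝ) * l) k := by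
    calc ∑' k : ℕ, (k : ℝ≥0∞) ^ m * P {ω | Z (ℓ+1) ω = k}
        = ∑' k : ℕ, ∑' n : ℕ, P {ω | Z ℓ ω = n} * ((k : ℝ≥0∞) ^ m * pois ((n:ℝ) * l) k) := by
          refine tsum_congr fun k => ?_
          rw [Z_dist_rec P ξ Z l (by linarith) hmeas hindep hpois hZ0 hZrec ℓ k,
            ← ENNReal.tsum_mul_left]
          refine tsum_congr fun n => ?_
          ring
      _ = ∑' n : ℕ, ∑' k : ℕ, P {ω | Z ℓ ω = n} * ((k : ℝ≥0∞) ^ m * pois ((n:ℝ) * l) k) :=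
          ENNReal.tsum_comm
      _ = _ := by
          refine tsum_congr fun n => ?_
          rw [ENNReal.tsum_mul_left]
  have step2 : ∀ n : ℕ, (∑' k : ℕ, (k : ℝ≥0∞) ^ m * pois ((n:ℝ) * l) k)
      ≤ (n : ℝ≥0∞) ^ m * L ^ m + B * ((n : ℝ≥0∞) ^ (m-1) * L ^ (m-1)) := by
    intro n
    cases n with
    | zero =>
      have hT : (∑' k : ℕ, (k : ℝ≥0∞) ^ m * pois (((0:ℕ):ℝ) * l) k) = 0 := by
        rw [ENNReal.tsum_eq_zero]
        intro k
        cases k with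
        | zero => simp [zero_pow (by omega : m ≠ 0)]
        | succ k =>
          have : pois (((0:ℕ):ℝ) * l) (k+1) = 0 := by
            simp [pois]
          rw [this, mul_zero]
      rw [hT]
      exact zero_le
    | succ n =>
      have hμ : (1:ℝ) ≤ ((n+1:ℕ):ℝ) * l := by
        have : (1:ℝ) ≤ ((n+1:ℕ):ℝ) := by exact_mod_cast Nat.one_le_iff_ne_zero.2 (by omega)
        nlinarith
      have h := moment_pois_le (((n+1:ℕ):ℝ) * l) hμ m hm
      have hof : ENNReal.ofReal (((n+1:ℕ):ℝ) * l) = ((n+1:ℕ) : ℝ≥0∞) * L := by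
        rw [ENNReal.ofReal_mul (by positivity), ENNReal.ofReal_natCast]
      rw [hof, mul_pow, mul_pow] at h
      exact h.trans_eq (by ring)
  rw [step1]
  calc ∑' n : ℕ, P {ω | Z ℓ ω = n} * ∑' k : ℕ, (k : ℝ≥0∞) ^ m * pois ((n:ℝ) * l) k
      ≤ ∑' n : ℕ, P {ω | Z ℓ ω = n}
          * ((n : ℝ≥0∞) ^ m * L ^ m + B * ((n : ℝ≥0∞) ^ (m-1) * L ^ (m-1))) := by
        exact ENNReal.tsum_le_tsum fun n => mul_le_mul_right (step2 n) _
    _ = ∑' n : ℕ, (L ^ m * ((n : ℝ≥0∞) ^ m * P {ω | Z ℓ ω = n})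
          + B * L ^ (m-1) * ((n : ℝ≥0∞) ^ (m-1) * P {ω | Z ℓ ω = n})) := by
        refine tsum_congr fun n => ?_
        ring
    _ = _ := by
        rw [ENNReal.tsum_add, ENNReal.tsum_mul_left, ENNReal.tsum_mul_left]
        try ring

lemma Z0_moment (hZ0 : ∀ ω, Z 0 ω = 1) (m : ℕ) :
    ∑' n : ℕ, (n : ℝ≥0∞) ^ m * P {ω | Z 0 ω = n} = 1 := by
  rw [tsum_eq_single 1]
  · have : {ω : Ω | Z 0 ω = 1} = Set.univ := by
      ext ω; simp [hZ0]
    rw [this, measure_univ]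
    simp
  · intro n hn
    have : {ω : Ω | Z 0 ω = n} = ∅ := by
      ext ω; simp [hZ0]; omega
    rw [this, measure_empty, mul_zero]

end Prob

/-- The key uniform moment bound, by strong induction on `m`. -/
lemma main_bound (l : ℝ) (hl : 1 < l) : ∀ m : ℕ, ∃ C : ℝ≥0∞, 1 ≤ C ∧ C ≠ ⊤ ∧
    ∀ (Ω : Type) (mΩ : MeasurableSpace Ω) (P : Measure Ω), IsProbabilityMeasure P →
    ∀ (ξ : ℕ → ℕ → Ω → ℕ) (Z : ℕ → Ω → ℕ),
      (∀ ℓ i, Measurable (ξ ℓ i)) →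
      iIndepFun (fun q : ℕ × ℕ => ξ q.1 q.2) P →
      (∀ ℓ i k, P {ω | ξ ℓ i ω = k}
          = ENNReal.ofReal (l ^ k * Real.exp (-l) / (Nat.factorial k))) →
      (∀ ω, Z 0 ω = 1) →
      (∀ ℓ ω, Z (ℓ + 1) ω = ∑ i ∈ Finset.range (Z ℓ ω), ξ ℓ i ω) →
      ∀ ℓ : ℕ, ∑' n : ℕ, (n : ℝ≥0∞) ^ m * P {ω | Z ℓ ω = n}
        ≤ C * (ENNReal.ofReal l) ^ (ℓ * m) := by
  have hL1 : (1:ℝ≥0∞) < ENNReal.ofReal l := by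
    rw [← ENNReal.ofReal_one]
    exact (ENNReal.ofReal_lt_ofReal_iff (by linarith)).2 hl
  set L := ENNReal.ofReal l with hLdef
  have hLne0 : L ≠ 0 := by positivity
  have hLnetop : L ≠ ⊤ := ENNReal.ofReal_ne_top
  have hL1' : 1 ≤ L := hL1.le
  intro m
  induction m with
  | zero =>
    refine ⟨1, le_rfl, ENNReal.one_ne_top, ?_⟩
    intro Ω mΩ P hP ξ Z hmeas hindep hpois hZ0 hZrec ℓ
    simp only [pow_zero, one_mul, Nat.mul_zero]
    rw [Z_partition P ξ Z hmeas hZ0 hZrec ℓ]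
  | succ m ih =>
    obtain ⟨C, hC1, hCtop, hC⟩ := ih
    set B := (∑ j ∈ range (m+1), (St (m+1) j : ℕ) : ℝ≥0∞) with hBdef
    have hBtop : B ≠ ⊤ := by
      rw [hBdef]
      exact_mod_cast ENNReal.natCast_ne_top _
    set D := B * L ^ m * C with hDdef
    have hDtop : D ≠ ⊤ := by
      apply ENNReal.mul_ne_top
      apply ENNReal.mul_ne_top hBtop (ENNReal.pow_ne_top hLnetop)
      exact hCtop
    set Li := L⁻¹ with hLidef
    have hLi1 : Li < 1 := ENNReal.inv_lt_one.2 hL1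
    have hLitop : Li ≠ ⊤ := ENNReal.inv_ne_top.2 hLne0
    have hsub0 : (1 : ℝ≥0∞) - Li ≠ 0 := by
      rw [ne_eq, tsub_eq_zero_iff_le]
      exact not_le.2 hLi1
    set g := Li * (1 - Li)⁻¹ with hgdef
    have hgtop : g ≠ ⊤ := ENNReal.mul_ne_top hLitop (ENNReal.inv_ne_top.2 hsub0)
    refine ⟨1 + D * g, le_add_right le_rfl, ?_, ?_⟩
    · exact ENNReal.add_ne_top.2 ⟨ENNReal.one_ne_top, ENNReal.mul_ne_top hDtop hgtop⟩
    intro Ω mΩ P hP ξ Z hmeas hindep hpois hZ0 hZrec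
    have key : ∀ ℓ : ℕ, ∑' n : ℕ, (n : ℝ≥0∞) ^ (m+1) * P {ω | Z ℓ ω = n}
        ≤ (1 + D * ∑ j ∈ range ℓ, Li ^ (j+1)) * L ^ (ℓ * (m+1)) := by
      intro ℓ
      induction ℓ with
      | zero =>
        rw [Z0_moment P Z hZ0 (m+1)]
        simp
      | succ ℓ ihℓ =>
        have hrec := moment_rec P ξ Z l (by linarith) hmeas hindep hpois hZ0 hZrec
          (m+1) ℓ (by omega)
        simp only [Nat.add_sub_cancel] at hrec
        have hm' : ∑' n : ℕ, (n : ℝ≥0∞) ^ m * P {ω | Z ℓ ω = n} ≤ C * L ^ (ℓ * m) :=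
          hC Ω mΩ P hP ξ Z hmeas hindep hpois hZ0 hZrec ℓ
        calc ∑' n : ℕ, (n : ℝ≥0∞) ^ (m+1) * P {ω | Z (ℓ+1) ω = n}
            ≤ L ^ (m+1) * ∑' n : ℕ, (n : ℝ≥0∞) ^ (m+1) * P {ω | Z ℓ ω = n}
              + B * L ^ m * ∑' n : ℕ, (n : ℝ≥0∞) ^ m * P {ω | Z ℓ ω = n} := hrec
          _ ≤ L ^ (m+1) * ((1 + D * ∑ j ∈ range ℓ, Li ^ (j+1)) * L ^ (ℓ * (m+1)))
              + B * L ^ m * (C * L ^ (ℓ * m)) := by gcongr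
          _ = (1 + D * ∑ j ∈ range ℓ, Li ^ (j+1)) * L ^ ((ℓ+1) * (m+1))
              + D * L ^ (ℓ * m) := by
              rw [hDdef]
              rw [show (ℓ+1) * (m+1) = (m+1) + ℓ * (m+1) by ring, pow_add]
              ring
          _ ≤ (1 + D * ∑ j ∈ range ℓ, Li ^ (j+1)) * L ^ ((ℓ+1) * (m+1))
              + D * (Li ^ (ℓ+1) * L ^ ((ℓ+1) * (m+1))) := by
              have hone : Li ^ (ℓ+1) * L ^ (ℓ+1) = 1 := by
                rw [hLidef, ← mul_pow, ENNReal.inv_mul_cancel hLne0 hLnetop, one_pow]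
              have hcancel : Li ^ (ℓ+1) * L ^ ((ℓ+1) * (m+1)) = L ^ ((ℓ+1) * m) := by
                calc Li ^ (ℓ+1) * L ^ ((ℓ+1) * (m+1))
                    = (Li ^ (ℓ+1) * L ^ (ℓ+1)) * L ^ ((ℓ+1) * m) := by
                      rw [mul_assoc, ← pow_add]
                      congr 2
                      ring
                  _ = L ^ ((ℓ+1) * m) := by rw [hone, one_mul]
              have hgeo : L ^ (ℓ * m) ≤ Li ^ (ℓ+1) * L ^ ((ℓ+1) * (m+1)) := by
                rw [hcancel]
                exact pow_le_pow_right' hL1' (Nat.mul_le_mul (Nat.le_succ ℓ) le_rfl)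
              exact add_le_add_right (mul_le_mul_right hgeo D) _
          _ = (1 + D * ∑ j ∈ range (ℓ+1), Li ^ (j+1)) * L ^ ((ℓ+1) * (m+1)) := by
              rw [Finset.sum_range_succ]
              ring
    intro ℓ
    refine (key ℓ).trans ?_
    gcongr
    calc ∑ j ∈ range ℓ, Li ^ (j+1) ≤ ∑' j : ℕ, Li ^ (j+1) := ENNReal.sum_le_tsum _
      _ = g := by rw [hgdef, ENNReal.tsum_geometric_add_one]

end GWaux

/-- Fix `λ > 1` and let `(Z_ℓ)` be a Galton–Watson process with Poisson(λ) offspring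
distribution, built from an i.i.d. array `ξ` via `Z₀ = 1`, `Z_{ℓ+1} = ∑_{i < Z_ℓ} ξ_{ℓ,i}`.
Then for every `m ≥ 1` there is a constant `C_{m,λ} > 0` such that
`E[Z_ℓ^m] ≤ C_{m,λ} · λ^{ℓ m}` for all `ℓ ≥ 1`. -/
theorem stmt_6 (l : ℝ) (hl : 1 < l) (m : ℕ) (hm : 1 ≤ m) :
    ∃ C : ℝ, 0 < C ∧
      ∀ (Ω : Type) (_ : MeasurableSpace Ω) (P : Measure Ω), IsProbabilityMeasure P →
      ∀ (ξ : ℕ → ℕ → Ω → ℕ) (Z : ℕ → Ω → ℕ),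
        (∀ ℓ i, Measurable (ξ ℓ i)) →
        iIndepFun (fun q : ℕ × ℕ => ξ q.1 q.2) P →
        (∀ ℓ i k, P {ω | ξ ℓ i ω = k}
            = ENNReal.ofReal (l ^ k * Real.exp (-l) / (Nat.factorial k))) →
        (∀ ω, Z 0 ω = 1) →
        (∀ ℓ ω, Z (ℓ + 1) ω = ∑ i ∈ Finset.range (Z ℓ ω), ξ ℓ i ω) →
        ∀ ℓ : ℕ, 1 ≤ ℓ →
          ∫⁻ ω, ((Z ℓ ω : ℝ≥0∞)) ^ m ∂P ≤ ENNReal.ofReal (C * l ^ (ℓ * m)) := by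
  obtain ⟨C, hC1, hCtop, hC⟩ := GWaux.main_bound l hl m
  refine ⟨C.toReal, ENNReal.toReal_pos (by intro h; rw [h] at hC1; simp at hC1) hCtop, ?_⟩
  intro Ω mΩ P hP ξ Z hmeas hindep hpois hZ0 hZrec ℓ _
  have hint : ∫⁻ ω, ((Z ℓ ω : ℝ≥0∞)) ^ m ∂P
      = ∑' k : ℕ, (k : ℝ≥0∞) ^ m * P {ω | Z ℓ ω = k} :=
    GWaux.lintegral_nat_comp P (Z ℓ) (GWaux.measurable_Z ξ Z hmeas hZ0 hZrec ℓ)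
      (fun k => (k : ℝ≥0∞) ^ m)
  rw [hint]
  refine (hC Ω mΩ P hP ξ Z hmeas hindep hpois hZ0 hZrec ℓ).trans ?_
  rw [ENNReal.ofReal_mul ENNReal.toReal_nonneg, ENNReal.ofReal_toReal hCtop,
    ENNReal.ofReal_pow (by linarith)]
end

section
/- Fix λ ≥ 1 and let (Z_ℓ)_{ℓ≥0} be a Galton–Watson process with Poisson(λ) offspring distribution. Then for every real θ > log λ, the quantity (1/r) · log P(∑_{ℓ=0}^{r} Z_ℓ > e^{θ r}) tends to −∞ as r → ∞; i.e., for every M > 0 there exists R such that for all r ≥ R, P(∑_{ℓ=0}^{r} Z_ℓ > e^{θ r}) ≤ e^{−M r}. -/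
open MeasureTheory ProbabilityTheory
open scoped ENNReal

set_option maxHeartbeats 2000000
namespace GW7

variable {Ω : Type*} [MeasurableSpace Ω] {P : Measure Ω}
variable {ξ : ℕ → ℕ → Ω → ℕ} {Z : ℕ → Ω → ℕ}

/-- σ-algebra generated by the ξ's with index in `S`. -/
def gal (ξ : ℕ → ℕ → Ω → ℕ) (S : Set (ℕ × ℕ)) : MeasurableSpace Ω :=
  ⨆ q ∈ S, MeasurableSpace.comap ((fun q : ℕ × ℕ => ξ q.1 q.2) q) inferInstance

lemma gal_le (hmeas : ∀ ℓ i, Measurable (ξ ℓ i)) (S : Set (ℕ × ℕ)) :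
    gal ξ S ≤ ‹MeasurableSpace Ω› :=
  iSup₂_le fun q _ => (hmeas q.1 q.2).comap_le

lemma gal_mono {S T : Set (ℕ × ℕ)} (h : S ⊆ T) : gal ξ S ≤ gal ξ T :=
  biSup_mono h

lemma meas_xi_gal {S : Set (ℕ × ℕ)} {q : ℕ × ℕ} (hq : q ∈ S) :
    Measurable[gal ξ S] (ξ q.1 q.2) :=
  Measurable.of_comap_le
    (le_biSup (f := fun q : ℕ × ℕ => MeasurableSpace.comap (ξ q.1 q.2) inferInstance) hq)

lemma measZ_gal (hZ0 : ∀ ω, Z 0 ω = 1)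
    (hZrec : ∀ ℓ ω, Z (ℓ + 1) ω = ∑ i ∈ Finset.range (Z ℓ ω), ξ ℓ i ω) :
    ∀ j, Measurable[gal ξ {q | q.1 < j}] (Z j) := by
  intro j
  induction j with
  | zero =>
    have : Z 0 = fun _ => 1 := funext hZ0
    rw [this]; exact measurable_const
  | succ j IH =>
    have hZj : Measurable[gal ξ {q | q.1 < j + 1}] (Z j) :=
      IH.mono (gal_mono fun q hq => Nat.lt_succ_of_lt hq) le_rfl
    refine @measurable_to_countable' ℕ Ω _ _ (gal ξ {q | q.1 < j + 1}) (Z (j + 1)) fun k => ?_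
    have hset : {ω | Z (j + 1) ω = k}
        = ⋃ n, ({ω | Z j ω = n} ∩ {ω | ∑ i ∈ Finset.range n, ξ j i ω = k}) := by
      ext ω
      simp only [Set.mem_setOf_eq, Set.mem_iUnion, Set.mem_inter_iff, hZrec]
      exact ⟨fun h => ⟨Z j ω, rfl, h⟩, by rintro ⟨n, rfl, h⟩; exact h⟩
    have : Z (j+1) ⁻¹' {k} = {ω | Z (j + 1) ω = k} := rfl
    rw [this, hset]
    refine MeasurableSet.iUnion fun n => MeasurableSet.inter ?_ ?_
    · exact hZj (measurableSet_singleton n)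
    · have hsum : Measurable[gal ξ {q | q.1 < j + 1}]
          (fun ω => ∑ i ∈ Finset.range n, ξ j i ω) :=
        Finset.measurable_sum _ fun i _ => meas_xi_gal (q := (j, i)) (Nat.lt_succ_self j)
      exact hsum (measurableSet_singleton k)

lemma measZ (hmeas : ∀ ℓ i, Measurable (ξ ℓ i)) (hZ0 : ∀ ω, Z 0 ω = 1)
    (hZrec : ∀ ℓ ω, Z (ℓ + 1) ω = ∑ i ∈ Finset.range (Z ℓ ω), ξ ℓ i ω) (j : ℕ) :
    Measurable (Z j) :=
  (measZ_gal hZ0 hZrec j).mono (gal_le hmeas _) le_rfl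

lemma peel [IsProbabilityMeasure P] (hmeas : ∀ ℓ i, Measurable (ξ ℓ i))
    (hind : iIndepFun (fun q : ℕ × ℕ => ξ q.1 q.2) P)
    {S : Set (ℕ × ℕ)} {q0 : ℕ × ℕ} (hq0 : q0 ∉ S)
    {X : Ω → ℝ≥0∞} (hX : Measurable[gal ξ S] X) (g : ℕ → ℝ≥0∞) :
    ∫⁻ ω, X ω * g (ξ q0.1 q0.2 ω) ∂P
      = (∫⁻ ω, X ω ∂P) * ∫⁻ ω, g (ξ q0.1 q0.2 ω) ∂P := by
  have hdisj : Disjoint S {q0} := Set.disjoint_singleton_right.mpr hq0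
  have hindep : Indep (gal ξ S) (gal ξ {q0}) P := by
    unfold gal
    exact indep_iSup_of_disjoint (m := fun q : ℕ × ℕ => MeasurableSpace.comap (ξ q.1 q.2) inferInstance)
      (fun q => (hmeas q.1 q.2).comap_le) hind.iIndep hdisj
  have hgm : Measurable g := measurable_of_countable g
  have hg : Measurable[gal ξ {q0}] (fun ω => g (ξ q0.1 q0.2 ω)) :=
    hgm.comp (meas_xi_gal (q := q0) (Set.mem_singleton q0))
  exact lintegral_mul_eq_lintegral_mul_lintegral_of_independent_measurableSpace
    (gal_le hmeas S) (gal_le hmeas {q0}) hindep hX hg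

end GW7

namespace GW7x
open GW7

lemma exp_tsum (x : ℝ) : ∑' k : ℕ, x ^ k / (Nat.factorial k) = Real.exp x := by
  rw [Real.exp_eq_exp_ℝ, NormedSpace.exp_eq_tsum_div]

lemma ofReal_exp_sum {ι : Type*} (s : Finset ι) (f : ι → ℝ) :
    ENNReal.ofReal (Real.exp (∑ i ∈ s, f i))
      = ∏ i ∈ s, ENNReal.ofReal (Real.exp (f i)) := by
  classical
  induction s using Finset.induction with
  | empty => simp
  | insert x s hx ih =>
    rw [Finset.sum_insert hx, Finset.prod_insert hx, Real.exp_add,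
      ENNReal.ofReal_mul (Real.exp_nonneg _), ih]

end GW7x

namespace GW7

variable {Ω : Type*} [MeasurableSpace Ω] {P : Measure Ω}
variable {ξ : ℕ → ℕ → Ω → ℕ} {Z : ℕ → Ω → ℕ} {l : ℝ}

lemma mgf [IsProbabilityMeasure P] (hl : 1 ≤ l) (hmeas : ∀ ℓ i, Measurable (ξ ℓ i))
    (hdist : ∀ ℓ i k, P {ω | ξ ℓ i ω = k}
        = ENNReal.ofReal (l ^ k * Real.exp (-l) / (Nat.factorial k)))
    (ℓ i : ℕ) (u : ℝ) :
    ∫⁻ ω, ENNReal.ofReal (Real.exp (u * ξ ℓ i ω)) ∂P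
      = ENNReal.ofReal (Real.exp (l * (Real.exp u - 1))) := by
  have hl0 : (0:ℝ) < l := lt_of_lt_of_le one_pos hl
  have hf : Measurable (fun k : ℕ => ENNReal.ofReal (Real.exp (u * k))) :=
    measurable_of_countable _
  rw [← lintegral_map hf (hmeas ℓ i), lintegral_countable']
  have hmap : ∀ k : ℕ, (P.map (ξ ℓ i)) {k}
      = ENNReal.ofReal (l ^ k * Real.exp (-l) / (Nat.factorial k)) := by
    intro k
    rw [Measure.map_apply (hmeas ℓ i) (measurableSet_singleton k)]
    exact hdist ℓ i k
  calc ∑' k : ℕ, ENNReal.ofReal (Real.exp (u * k)) * (P.map (ξ ℓ i)) {k}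
      = ∑' k : ℕ, ENNReal.ofReal ((l * Real.exp u) ^ k / (Nat.factorial k) * Real.exp (-l)) := by
        refine tsum_congr fun k => ?_
        rw [hmap k, ← ENNReal.ofReal_mul (Real.exp_nonneg _)]
        congr 1
        rw [mul_comm u (k:ℝ), Real.exp_nat_mul, mul_pow]
        ring
    _ = ENNReal.ofReal (∑' k : ℕ, (l * Real.exp u) ^ k / (Nat.factorial k) * Real.exp (-l)) := by
        rw [ENNReal.ofReal_tsum_of_nonneg]
        · intro k
          have h1 : (0:ℝ) ≤ (l * Real.exp u) ^ k :=
            pow_nonneg (mul_nonneg hl0.le (Real.exp_nonneg u)) k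
          exact mul_nonneg (div_nonneg h1 (Nat.cast_nonneg _)) (Real.exp_nonneg _)
        · exact (Real.summable_pow_div_factorial _).mul_right _
    _ = _ := by
        rw [tsum_mul_right, GW7x.exp_tsum, ← Real.exp_add]
        congr 1
        ring

lemma prodfact [IsProbabilityMeasure P] (hmeas : ∀ ℓ i, Measurable (ξ ℓ i))
    (hind : iIndepFun (fun q : ℕ × ℕ => ξ q.1 q.2) P)
    {r : ℕ} {A : Set Ω} (hA : MeasurableSet[gal ξ {q | q.1 < r}] A) (g : ℕ → ℝ≥0∞)
    (m : ℕ) :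
    ∫⁻ ω, A.indicator 1 ω * ∏ i ∈ Finset.range m, g (ξ r i ω) ∂P
      = P A * ∏ i ∈ Finset.range m, ∫⁻ ω, g (ξ r i ω) ∂P := by
  induction m with
  | zero => simp [lintegral_indicator_one ((gal_le hmeas _) _ hA)]
  | succ m IH =>
    have hq0 : ((r, m) : ℕ × ℕ) ∉ ({q | q.1 < r} ∪ {q | q.1 = r ∧ q.2 < m} : Set (ℕ × ℕ)) := by
      simp
    have hA1 : MeasurableSet[gal ξ ({q | q.1 < r} ∪ {q | q.1 = r ∧ q.2 < m})] A :=
      gal_mono Set.subset_union_left A hA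
    have hXa : Measurable[gal ξ ({q | q.1 < r} ∪ {q | q.1 = r ∧ q.2 < m})]
        (A.indicator (1 : Ω → ℝ≥0∞)) :=
      Measurable.indicator measurable_const hA1
    have hXb : Measurable[gal ξ ({q | q.1 < r} ∪ {q | q.1 = r ∧ q.2 < m})]
        (fun ω => ∏ i ∈ Finset.range m, g (ξ r i ω)) :=
      Finset.measurable_prod _ fun i hi => (measurable_of_countable g).comp
          (meas_xi_gal (q := (r, i)) (Or.inr ⟨rfl, Finset.mem_range.1 hi⟩))
    have hX : Measurable[gal ξ ({q | q.1 < r} ∪ {q | q.1 = r ∧ q.2 < m})]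
        (fun ω => A.indicator 1 ω * ∏ i ∈ Finset.range m, g (ξ r i ω)) :=
      Measurable.mul hXa hXb
    calc ∫⁻ ω, A.indicator 1 ω * ∏ i ∈ Finset.range (m+1), g (ξ r i ω) ∂P
        = ∫⁻ ω, (A.indicator 1 ω * ∏ i ∈ Finset.range m, g (ξ r i ω)) * g (ξ r m ω) ∂P := by
          simp_rw [Finset.prod_range_succ, mul_assoc]
      _ = (∫⁻ ω, A.indicator 1 ω * ∏ i ∈ Finset.range m, g (ξ r i ω) ∂P)
            * ∫⁻ ω, g (ξ r m ω) ∂P := peel hmeas hind hq0 hX g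
      _ = _ := by rw [IH, Finset.prod_range_succ, mul_assoc]

end GW7

namespace GW7

variable {Ω : Type*} [MeasurableSpace Ω] {P : Measure Ω}
variable {ξ : ℕ → ℕ → Ω → ℕ} {Z : ℕ → Ω → ℕ} {l : ℝ}

lemma key [IsProbabilityMeasure P] (hl : 1 ≤ l)
    (hmeas : ∀ ℓ i, Measurable (ξ ℓ i))
    (hind : iIndepFun (fun q : ℕ × ℕ => ξ q.1 q.2) P)
    (hdist : ∀ ℓ i k, P {ω | ξ ℓ i ω = k}
        = ENNReal.ofReal (l ^ k * Real.exp (-l) / (Nat.factorial k)))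
    (hZ0 : ∀ ω, Z 0 ω = 1)
    (hZrec : ∀ ℓ ω, Z (ℓ + 1) ω = ∑ i ∈ Finset.range (Z ℓ ω), ξ ℓ i ω)
    (r : ℕ) (H : (Fin (r+1) → ℕ) → ℝ≥0∞) (u : ℝ) :
    ∫⁻ ω, H (fun j => Z j ω) * ENNReal.ofReal (Real.exp (u * Z (r+1) ω)) ∂P
      = ∫⁻ ω, H (fun j => Z j ω)
          * ENNReal.ofReal (Real.exp ((l * (Real.exp u - 1)) * Z r ω)) ∂P := by
  have hZm : ∀ j : ℕ, Measurable (Z j) := measZ hmeas hZ0 hZrec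
  set c : ℝ≥0∞ := ENNReal.ofReal (Real.exp (l * (Real.exp u - 1))) with hc
  have hHm : Measurable H := measurable_of_countable H
  have hZvecm : Measurable (fun ω (j : Fin (r+1)) => Z j ω) :=
    measurable_pi_lambda _ fun j => hZm j
  set A : (Fin (r+1) → ℕ) → Set Ω :=
    fun n => (fun ω (j : Fin (r+1)) => Z j ω) ⁻¹' {n} with hA
  have hAmeas : ∀ n, MeasurableSet (A n) := fun n => hZvecm (measurableSet_singleton n)
  have hAgal : ∀ n, MeasurableSet[gal ξ {q | q.1 < r}] (A n) := by
    intro n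
    have hrepr : A n = ⋂ j : Fin (r+1), Z j ⁻¹' {n j} := by
      ext ω
      simp [hA, funext_iff]
    rw [hrepr]
    refine MeasurableSet.iInter fun j => ?_
    have hj : Measurable[gal ξ {q | q.1 < r}] (Z j) :=
      (measZ_gal hZ0 hZrec j).mono
        (gal_mono fun q hq => lt_of_lt_of_le hq (Nat.lt_succ_iff.mp j.isLt)) le_rfl
    exact hj (measurableSet_singleton (n j))
  have decomp : ∀ f : Ω → ℝ≥0∞, Measurable f →
      ∫⁻ ω, f ω ∂P = ∑' n : Fin (r+1) → ℕ, ∫⁻ ω, (A n).indicator f ω ∂P := by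
    intro f hf
    rw [← lintegral_tsum fun n => (hf.indicator (hAmeas n)).aemeasurable]
    refine lintegral_congr fun ω => ?_
    rw [tsum_eq_single (fun j : Fin (r+1) => Z j ω)]
    · exact (Set.indicator_of_mem
        (show ω ∈ A (fun j : Fin (r+1) => Z j ω) from rfl) f).symm
    · intro b hb
      refine Set.indicator_of_notMem (fun hmem => hb ?_) f
      exact (Set.mem_singleton_iff.mp hmem).symm
  -- measurability of both integrands
  have hfL : Measurable (fun ω => H (fun j => Z j ω)
      * ENNReal.ofReal (Real.exp (u * Z (r+1) ω))) :=
    (hHm.comp hZvecm).mul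
      ((measurable_of_countable (fun k : ℕ => ENNReal.ofReal (Real.exp (u * k)))).comp
        (hZm (r+1)))
  have hfR : Measurable (fun ω => H (fun j => Z j ω)
      * ENNReal.ofReal (Real.exp ((l * (Real.exp u - 1)) * Z r ω))) :=
    (hHm.comp hZvecm).mul
      ((measurable_of_countable
        (fun k : ℕ => ENNReal.ofReal (Real.exp ((l * (Real.exp u - 1)) * k)))).comp (hZm r))
  rw [decomp _ hfL, decomp _ hfR]
  refine tsum_congr fun n => ?_
  set m : ℕ := n (Fin.last r) with hm
  have hcm : c ^ m = ENNReal.ofReal (Real.exp ((l * (Real.exp u - 1)) * (m : ℝ))) := by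
    rw [hc, ← ENNReal.ofReal_pow (Real.exp_nonneg _), ← Real.exp_nat_mul, mul_comm (m : ℝ)]
  -- LHS term
  have hindL : (A n).indicator
        (fun ω => H (fun j => Z j ω) * ENNReal.ofReal (Real.exp (u * Z (r+1) ω)))
      = fun ω => H n * ((A n).indicator 1 ω
          * ∏ i ∈ Finset.range m, ENNReal.ofReal (Real.exp (u * ξ r i ω))) := by
    funext ω
    by_cases hω : ω ∈ A n
    · have hvec : (fun j : Fin (r+1) => Z j ω) = n := hω
      have hn : ∀ j : Fin (r+1), Z (j : ℕ) ω = n j := fun j => congrFun hvec j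
      have hZr : Z r ω = m := hn (Fin.last r)
      have hsum : (u * (Z (r+1) ω : ℝ)) = ∑ i ∈ Finset.range m, u * (ξ r i ω : ℝ) := by
        rw [hZrec r ω, hZr]
        push_cast
        rw [Finset.mul_sum]
      rw [Set.indicator_of_mem hω, Set.indicator_of_mem hω, hvec, hsum,
        GW7x.ofReal_exp_sum]
      simp
    · simp [Set.indicator_of_notMem hω]
  have hintL : ∫⁻ ω, (A n).indicator
        (fun ω => H (fun j => Z j ω) * ENNReal.ofReal (Real.exp (u * Z (r+1) ω))) ω ∂P
      = H n * (P (A n) * c ^ m) := by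
    rw [hindL]
    have hinner : Measurable (fun ω => (A n).indicator 1 ω
        * ∏ i ∈ Finset.range m, ENNReal.ofReal (Real.exp (u * ξ r i ω))) :=
      (measurable_one.indicator (hAmeas n)).mul
        (Finset.measurable_prod _ fun i _ =>
          (measurable_of_countable (fun k : ℕ => ENNReal.ofReal (Real.exp (u * k)))).comp
            (hmeas r i))
    rw [lintegral_const_mul _ hinner,
      prodfact hmeas hind (hAgal n) (fun k : ℕ => ENNReal.ofReal (Real.exp (u * k))) m]
    congr 2
    calc ∏ i ∈ Finset.range m, ∫⁻ ω, ENNReal.ofReal (Real.exp (u * ξ r i ω)) ∂P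
        = ∏ _i ∈ Finset.range m, c :=
          Finset.prod_congr rfl fun i _ => mgf hl hmeas hdist r i u
      _ = c ^ m := by rw [Finset.prod_const, Finset.card_range]
  -- RHS term
  have hindR : (A n).indicator (fun ω => H (fun j => Z j ω)
        * ENNReal.ofReal (Real.exp ((l * (Real.exp u - 1)) * Z r ω)))
      = (A n).indicator (fun _ => H n * c ^ m) := by
    refine Set.indicator_congr fun ω hω => ?_
    have hvec : (fun j : Fin (r+1) => Z j ω) = n := hω
    have hZr : Z r ω = m := congrFun hvec (Fin.last r)
    rw [hvec, hZr, hcm]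
  have hintR : ∫⁻ ω, (A n).indicator (fun ω => H (fun j => Z j ω)
        * ENNReal.ofReal (Real.exp ((l * (Real.exp u - 1)) * Z r ω))) ω ∂P
      = H n * c ^ m * P (A n) := by
    rw [hindR, lintegral_indicator_const (hAmeas n)]
  rw [hintL, hintR]
  ring

end GW7

namespace GW7

/-- the backward MGF recursion sequence -/
noncomputable def vseq (l t : ℝ) : ℕ → ℝ :=
  fun k => Nat.rec t (fun _ v => t + l * (Real.exp v - 1)) k

variable {Ω : Type*} [MeasurableSpace Ω] {P : Measure Ω}
variable {ξ : ℕ → ℕ → Ω → ℕ} {Z : ℕ → Ω → ℕ} {l : ℝ}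

lemma rec_step [IsProbabilityMeasure P] (hl : 1 ≤ l)
    (hmeas : ∀ ℓ i, Measurable (ξ ℓ i))
    (hind : iIndepFun (fun q : ℕ × ℕ => ξ q.1 q.2) P)
    (hdist : ∀ ℓ i k, P {ω | ξ ℓ i ω = k}
        = ENNReal.ofReal (l ^ k * Real.exp (-l) / (Nat.factorial k)))
    (hZ0 : ∀ ω, Z 0 ω = 1)
    (hZrec : ∀ ℓ ω, Z (ℓ + 1) ω = ∑ i ∈ Finset.range (Z ℓ ω), ξ ℓ i ω)
    (r : ℕ) (t u : ℝ) :
    ∫⁻ ω, ENNReal.ofReal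
        (Real.exp (t * ∑ ℓ ∈ Finset.range (r+1), (Z ℓ ω : ℝ) + u * Z (r+1) ω)) ∂P
      = ∫⁻ ω, ENNReal.ofReal
        (Real.exp (t * ∑ ℓ ∈ Finset.range r, (Z ℓ ω : ℝ)
          + (t + l * (Real.exp u - 1)) * Z r ω)) ∂P := by
  have hkey := key hl hmeas hind hdist hZ0 hZrec r
    (fun v => ENNReal.ofReal (Real.exp (t * ∑ j : Fin (r+1), ((v j : ℕ) : ℝ)))) u
  have e1 : ∀ ω : Ω, ENNReal.ofReal (Real.exp (t * ∑ j : Fin (r+1), ((Z (j:ℕ) ω : ℕ) : ℝ)))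
      * ENNReal.ofReal (Real.exp (u * Z (r+1) ω))
      = ENNReal.ofReal
        (Real.exp (t * ∑ ℓ ∈ Finset.range (r+1), (Z ℓ ω : ℝ) + u * Z (r+1) ω)) := by
    intro ω
    rw [← ENNReal.ofReal_mul (Real.exp_nonneg _), ← Real.exp_add,
      Finset.sum_range (fun ℓ => (Z ℓ ω : ℝ))]
  have e2 : ∀ ω : Ω, ENNReal.ofReal (Real.exp (t * ∑ j : Fin (r+1), ((Z (j:ℕ) ω : ℕ) : ℝ)))
      * ENNReal.ofReal (Real.exp ((l * (Real.exp u - 1)) * Z r ω))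
      = ENNReal.ofReal (Real.exp (t * ∑ ℓ ∈ Finset.range r, (Z ℓ ω : ℝ)
          + (t + l * (Real.exp u - 1)) * Z r ω)) := by
    intro ω
    rw [← ENNReal.ofReal_mul (Real.exp_nonneg _), ← Real.exp_add,
      ← Finset.sum_range (fun ℓ => (Z ℓ ω : ℝ))]
    congr 1
    rw [Finset.sum_range_succ]
    ring
  calc ∫⁻ ω, ENNReal.ofReal
        (Real.exp (t * ∑ ℓ ∈ Finset.range (r+1), (Z ℓ ω : ℝ) + u * Z (r+1) ω)) ∂P
      = ∫⁻ ω, ENNReal.ofReal (Real.exp (t * ∑ j : Fin (r+1), ((Z (j:ℕ) ω : ℕ) : ℝ)))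
          * ENNReal.ofReal (Real.exp (u * Z (r+1) ω)) ∂P :=
        lintegral_congr fun ω => (e1 ω).symm
    _ = ∫⁻ ω, ENNReal.ofReal (Real.exp (t * ∑ j : Fin (r+1), ((Z (j:ℕ) ω : ℕ) : ℝ)))
          * ENNReal.ofReal (Real.exp ((l * (Real.exp u - 1)) * Z r ω)) ∂P := hkey
    _ = _ := lintegral_congr fun ω => e2 ω

lemma iter [IsProbabilityMeasure P] (hl : 1 ≤ l)
    (hmeas : ∀ ℓ i, Measurable (ξ ℓ i))
    (hind : iIndepFun (fun q : ℕ × ℕ => ξ q.1 q.2) P)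
    (hdist : ∀ ℓ i k, P {ω | ξ ℓ i ω = k}
        = ENNReal.ofReal (l ^ k * Real.exp (-l) / (Nat.factorial k)))
    (hZ0 : ∀ ω, Z 0 ω = 1)
    (hZrec : ∀ ℓ ω, Z (ℓ + 1) ω = ∑ i ∈ Finset.range (Z ℓ ω), ξ ℓ i ω)
    (t : ℝ) : ∀ r k : ℕ,
    ∫⁻ ω, ENNReal.ofReal
        (Real.exp (t * ∑ ℓ ∈ Finset.range r, (Z ℓ ω : ℝ) + vseq l t k * Z r ω)) ∂P
      = ENNReal.ofReal (Real.exp (vseq l t (k + r))) := by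
  intro r
  induction r with
  | zero =>
    intro k
    have hconst : ∀ ω : Ω,
        (t * ∑ ℓ ∈ Finset.range 0, (Z ℓ ω : ℝ) + vseq l t k * Z 0 ω) = vseq l t k := by
      intro ω
      simp [hZ0 ω]
    calc ∫⁻ ω, ENNReal.ofReal
          (Real.exp (t * ∑ ℓ ∈ Finset.range 0, (Z ℓ ω : ℝ) + vseq l t k * Z 0 ω)) ∂P
        = ∫⁻ _ω, ENNReal.ofReal (Real.exp (vseq l t k)) ∂P :=
          lintegral_congr fun ω => by rw [hconst ω]
      _ = ENNReal.ofReal (Real.exp (vseq l t (k + 0))) := by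
          simp [lintegral_const]
  | succ r IH =>
    intro k
    rw [rec_step hl hmeas hind hdist hZ0 hZrec r t (vseq l t k)]
    have hv : t + l * (Real.exp (vseq l t k) - 1) = vseq l t (k + 1) := rfl
    rw [hv, IH (k + 1), show k + 1 + r = k + (r + 1) from by omega]

lemma mgf_total [IsProbabilityMeasure P] (hl : 1 ≤ l)
    (hmeas : ∀ ℓ i, Measurable (ξ ℓ i))
    (hind : iIndepFun (fun q : ℕ × ℕ => ξ q.1 q.2) P)
    (hdist : ∀ ℓ i k, P {ω | ξ ℓ i ω = k}
        = ENNReal.ofReal (l ^ k * Real.exp (-l) / (Nat.factorial k)))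
    (hZ0 : ∀ ω, Z 0 ω = 1)
    (hZrec : ∀ ℓ ω, Z (ℓ + 1) ω = ∑ i ∈ Finset.range (Z ℓ ω), ξ ℓ i ω)
    (t : ℝ) (r : ℕ) :
    ∫⁻ ω, ENNReal.ofReal
        (Real.exp (t * ∑ ℓ ∈ Finset.range (r+1), (Z ℓ ω : ℝ))) ∂P
      = ENNReal.ofReal (Real.exp (vseq l t r)) := by
  have h := iter hl hmeas hind hdist hZ0 hZrec t r 0
  rw [Nat.zero_add] at h
  rw [← h]
  refine lintegral_congr fun ω => ?_
  congr 1
  have hv0 : vseq l t 0 = t := rfl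
  rw [hv0, Finset.sum_range_succ]
  ring

end GW7

namespace GW7

lemma vseq_le {l t ε : ℝ} (hl : 1 ≤ l) (ht : 0 < t) (hε0 : 0 < ε) (hε1 : ε ≤ 1)
    {r : ℕ} (hyp : t * ((r : ℝ) + 1) * (l * Real.exp ε) ^ r ≤ ε) :
    ∀ k ≤ r, 0 ≤ vseq l t k ∧ vseq l t k ≤ t * ((k : ℝ) + 1) * (l * Real.exp ε) ^ k := by
  set K := l * Real.exp ε with hK
  have hl0 : (0:ℝ) < l := lt_of_lt_of_le one_pos hl
  have hK1 : 1 ≤ K := by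
    have h1 : 1 ≤ Real.exp ε := Real.one_le_exp hε0.le
    nlinarith
  have hK0 : (0:ℝ) < K := lt_of_lt_of_le one_pos hK1
  intro k
  induction k with
  | zero =>
    intro _
    refine ⟨ht.le, ?_⟩
    simp [vseq]
  | succ k IH =>
    intro hk1
    have hk : k ≤ r := Nat.le_of_succ_le hk1
    obtain ⟨h0, hub⟩ := IH hk
    have hmono : t * ((k : ℝ) + 1) * K ^ k ≤ t * ((r : ℝ) + 1) * K ^ r := by
      have h1 : ((k : ℝ) + 1) ≤ ((r : ℝ) + 1) := by
        have : (k : ℝ) ≤ (r : ℝ) := Nat.cast_le.mpr hk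
        linarith
      have h2 : K ^ k ≤ K ^ r := pow_le_pow_right₀ hK1 hk
      calc t * ((k : ℝ) + 1) * K ^ k ≤ t * ((k : ℝ) + 1) * K ^ r := by
            have hpos : (0:ℝ) ≤ t * ((k : ℝ) + 1) := by positivity
            exact mul_le_mul_of_nonneg_left h2 hpos
        _ ≤ t * ((r : ℝ) + 1) * K ^ r := by
            have h4 : (0:ℝ) ≤ K ^ r := (pow_pos hK0 r).le
            have h5 : t * ((k : ℝ) + 1) ≤ t * ((r : ℝ) + 1) :=
              mul_le_mul_of_nonneg_left h1 ht.le
            exact mul_le_mul_of_nonneg_right h5 h4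
    have hvε : vseq l t k ≤ ε := le_trans hub (le_trans hmono hyp)
    set v := vseq l t k with hv
    have habs : |Real.exp v - 1 - v| ≤ v ^ 2 := by
      apply Real.abs_exp_sub_one_sub_id_le
      rw [abs_of_nonneg h0]
      linarith
    have hexpε : 1 + ε ≤ Real.exp ε := by
      have := Real.add_one_le_exp ε
      linarith
    have hexp : Real.exp v - 1 ≤ v * Real.exp ε := by
      have h1 : Real.exp v - 1 ≤ v + v ^ 2 := by
        have := abs_le.mp habs
        linarith [this.2]
      have h2 : v + v ^ 2 ≤ v * (1 + ε) := by nlinarith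
      have h3 : v * (1 + ε) ≤ v * Real.exp ε := by nlinarith
      linarith
    have hstep : vseq l t (k+1) = t + l * (Real.exp v - 1) := rfl
    have hKpow1 : (1:ℝ) ≤ K ^ (k+1) := one_le_pow₀ hK1
    constructor
    · have h1 : (1:ℝ) ≤ Real.exp v := Real.one_le_exp h0
      rw [hstep]
      nlinarith
    · rw [hstep]
      have h4 : l * (Real.exp v - 1) ≤ l * (v * Real.exp ε) :=
        mul_le_mul_of_nonneg_left hexp hl0.le
      have h5 : l * (v * Real.exp ε) = K * v := by rw [hK]; ring
      have h6 : K * v ≤ K * (t * ((k : ℝ) + 1) * K ^ k) :=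
        mul_le_mul_of_nonneg_left hub hK0.le
      have h7 : K * (t * ((k : ℝ) + 1) * K ^ k) = t * ((k : ℝ) + 1) * K ^ (k+1) := by
        rw [pow_succ]; ring
      have h8 : ((k+1 : ℕ) : ℝ) = (k : ℝ) + 1 := by push_cast; ring
      rw [h8]
      nlinarith

lemma eventual {ε δ M : ℝ} (hε : 0 < ε) (hδ : 0 < δ) (hM : 0 < M) :
    ∃ R : ℕ, ∀ r : ℕ, R ≤ r → M * r + ε ≤ ε * Real.exp (δ * r) / ((r : ℝ) + 1) := by
  have h2 : Filter.Tendsto (fun x : ℝ => Real.exp x / x ^ 2) Filter.atTop Filter.atTop :=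
    Real.tendsto_exp_div_pow_atTop 2
  have h3 : Filter.Tendsto (fun r : ℕ => δ * (r : ℝ)) Filter.atTop Filter.atTop :=
    (tendsto_natCast_atTop_atTop (R := ℝ)).const_mul_atTop hδ
  have h4 : Filter.Tendsto (fun r : ℕ => Real.exp (δ * r) / (δ * r) ^ 2)
      Filter.atTop Filter.atTop := h2.comp h3
  set C : ℝ := 2 * (M + ε) / (ε * δ ^ 2) with hC
  obtain ⟨R1, hR1⟩ := Filter.eventually_atTop.mp (Filter.Tendsto.eventually_ge_atTop h4 C)
  refine ⟨max R1 1, fun r hr => ?_⟩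
  have hrR : R1 ≤ r := le_trans (le_max_left _ _) hr
  have hr1 : 1 ≤ r := le_trans (le_max_right _ _) hr
  have hr1' : (1:ℝ) ≤ (r:ℝ) := by exact_mod_cast hr1
  have hx := hR1 r hrR
  have hx0 : (0:ℝ) < δ * r := by nlinarith
  have hx2 : (0:ℝ) < (δ * r) ^ 2 := by positivity
  have hexp : C * (δ * r) ^ 2 ≤ Real.exp (δ * r) := by
    rw [le_div_iff₀ hx2] at hx
    linarith

  have hCval : C * (δ * r) ^ 2 = 2 * (M + ε) * r ^ 2 / ε := by
    rw [hC]
    field_simp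
  have hrpos : (0:ℝ) < (r:ℝ) + 1 := by linarith
  rw [le_div_iff₀ hrpos]
  have e0 : (0:ℝ) ≤ (r:ℝ) ^ 2 - (r:ℝ) := by nlinarith
  have e1 : M * r ≤ M * (r:ℝ) ^ 2 := by nlinarith [mul_nonneg hM.le e0]
  have e2 : ε * r ≤ ε * (r:ℝ) ^ 2 := by nlinarith [mul_nonneg hε.le e0]
  have e3 : ε ≤ ε * (r:ℝ) ^ 2 := by nlinarith
  have hgoal : (M * r + ε) * ((r:ℝ) + 1) ≤ 2 * (M + ε) * r ^ 2 := by nlinarith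
  have : ε * (2 * (M + ε) * r ^ 2 / ε) ≤ ε * Real.exp (δ * r) := by
    rw [← hCval]
    exact mul_le_mul_of_nonneg_left hexp hε.le
  have heq : ε * (2 * (M + ε) * r ^ 2 / ε) = 2 * (M + ε) * r ^ 2 := by
    field_simp
  linarith [heq ▸ this]

end GW7

open GW7

/-- Fix `λ ≥ 1` and let `(Z_ℓ)` be a Galton–Watson process with Poisson(λ) offspring
distribution. Then for every real `θ > log λ`,
`(1/r)·log P(∑_{ℓ=0}^{r} Z_ℓ > e^{θ r}) → −∞` as `r → ∞`; i.e. for every `M > 0` there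
exists `R` such that for all `r ≥ R`, `P(∑_{ℓ=0}^{r} Z_ℓ > e^{θ r}) ≤ e^{−M r}`. -/
theorem stmt_7 (l : ℝ) (hl : 1 ≤ l)
    (Ω : Type*) [MeasurableSpace Ω] (P : Measure Ω) [IsProbabilityMeasure P]
    (ξ : ℕ → ℕ → Ω → ℕ) (Z : ℕ → Ω → ℕ)
    (hmeas : ∀ ℓ i, Measurable (ξ ℓ i))
    (hind : iIndepFun (fun q : ℕ × ℕ => ξ q.1 q.2) P)
    (hdist : ∀ ℓ i k, P {ω | ξ ℓ i ω = k}
        = ENNReal.ofReal (l ^ k * Real.exp (-l) / (Nat.factorial k)))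
    (hZ0 : ∀ ω, Z 0 ω = 1)
    (hZrec : ∀ ℓ ω, Z (ℓ + 1) ω = ∑ i ∈ Finset.range (Z ℓ ω), ξ ℓ i ω)
    (θ : ℝ) (hθ : Real.log l < θ) :
    ∀ M : ℝ, 0 < M → ∃ R : ℕ, ∀ r : ℕ, R ≤ r →
      P {ω | Real.exp (θ * r) < ∑ ℓ ∈ Finset.range (r + 1), (Z ℓ ω : ℝ)}
        ≤ ENNReal.ofReal (Real.exp (-M * r)) := by
  intro M hM
  have hl0 : (0:ℝ) < l := lt_of_lt_of_le one_pos hl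
  have hZm : ∀ j, Measurable (Z j) := measZ hmeas hZ0 hZrec
  set ε : ℝ := min 1 ((θ - Real.log l) / 2) with hεdef
  have hε0 : 0 < ε := lt_min one_pos (by linarith)
  have hε1 : ε ≤ 1 := min_le_left _ _
  have hε2 : ε ≤ (θ - Real.log l) / 2 := min_le_right _ _
  set K : ℝ := l * Real.exp ε with hKdef
  have hK0 : (0:ℝ) < K := by positivity
  have hK1 : 1 ≤ K := by nlinarith [Real.one_le_exp hε0.le]
  have hlogK : Real.log K = Real.log l + ε := by
    rw [hKdef, Real.log_mul (ne_of_gt hl0) (Real.exp_ne_zero ε), Real.log_exp]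
  set δ : ℝ := θ - Real.log K with hδdef
  have hδ : 0 < δ := by rw [hδdef, hlogK]; linarith
  obtain ⟨R0, hR0⟩ := eventual hε0 hδ hM
  refine ⟨R0, fun r hr => ?_⟩
  have hKr : (0:ℝ) < K ^ r := pow_pos hK0 r
  have hden : (0:ℝ) < ((r:ℝ) + 1) * K ^ r := by positivity
  set t : ℝ := ε / (((r:ℝ) + 1) * K ^ r) with htdef
  have ht : 0 < t := div_pos hε0 hden
  have hyp : t * ((r:ℝ) + 1) * K ^ r = ε := by
    have h1 : ((r:ℝ) + 1) ≠ 0 := by positivity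
    have h2 : K ^ r ≠ 0 := ne_of_gt hKr
    rw [htdef]
    field_simp
  have hvs := vseq_le hl ht hε0 hε1 (le_of_eq hyp) r le_rfl
  have hvr : vseq l t r ≤ ε := hvs.2.trans (le_of_eq hyp)
  set S : Ω → ℝ := fun ω => ∑ ℓ ∈ Finset.range (r + 1), (Z ℓ ω : ℝ) with hSdef
  have hSm : Measurable S :=
    Finset.measurable_sum _ fun ℓ _ =>
      (measurable_of_countable (fun n : ℕ => (n : ℝ))).comp (hZm ℓ)
  set a : ℝ := Real.exp (θ * r) with hadef
  have hAset : MeasurableSet {ω | a < S ω} := measurableSet_lt measurable_const hSm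
  have hexpSm : Measurable (fun ω => ENNReal.ofReal (Real.exp (t * S ω))) :=
    ENNReal.measurable_ofReal.comp (Real.measurable_exp.comp (hSm.const_mul t))
  have step1 : P {ω | a < S ω}
      ≤ ∫⁻ ω, ENNReal.ofReal (Real.exp (t * S ω)) * ENNReal.ofReal (Real.exp (-(t * a))) ∂P := by
    rw [← lintegral_indicator_one hAset]
    refine lintegral_mono fun ω => ?_
    by_cases hω : ω ∈ {ω | a < S ω}
    · rw [Set.indicator_of_mem hω, ← ENNReal.ofReal_mul (Real.exp_nonneg _), ← Real.exp_add]
      refine ENNReal.one_le_ofReal.mpr (Real.one_le_exp ?_)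
      have hlt : a < S ω := hω
      have h6 : t * a ≤ t * S ω := mul_le_mul_of_nonneg_left hlt.le ht.le
      linarith
    · rw [Set.indicator_of_notMem hω]
      simp
  have step2 : ∫⁻ ω, ENNReal.ofReal (Real.exp (t * S ω))
        * ENNReal.ofReal (Real.exp (-(t * a))) ∂P
      = ENNReal.ofReal (Real.exp (vseq l t r)) * ENNReal.ofReal (Real.exp (-(t * a))) := by
    rw [lintegral_mul_const _ hexpSm]
    congr 1
    exact mgf_total hl hmeas hind hdist hZ0 hZrec t r
  have e1 : t * a = ε * Real.exp (θ * r) / (((r:ℝ) + 1) * K ^ r) := by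
    rw [htdef, hadef, div_mul_eq_mul_div]
  have hKexp : K ^ r = Real.exp ((r:ℝ) * Real.log K) := by
    rw [← Real.log_pow, Real.exp_log hKr]
  have hexpeq : Real.exp (δ * r) * Real.exp ((r:ℝ) * Real.log K) = Real.exp (θ * r) := by
    rw [← Real.exp_add]
    congr 1
    rw [hδdef]
    ring
  have e2 : ε * Real.exp (δ * r) / ((r:ℝ) + 1)
      = ε * Real.exp (θ * r) / (((r:ℝ) + 1) * K ^ r) := by
    rw [div_eq_div_iff (by positivity) (by positivity), hKexp]
    linear_combination (ε * ((r:ℝ) + 1)) * hexpeq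
  have hfin : vseq l t r - t * a ≤ -M * r := by
    have h := hR0 r hr
    rw [e2, ← e1] at h
    linarith
  calc P {ω | a < S ω}
      ≤ ∫⁻ ω, ENNReal.ofReal (Real.exp (t * S ω))
          * ENNReal.ofReal (Real.exp (-(t * a))) ∂P := step1
    _ = ENNReal.ofReal (Real.exp (vseq l t r)) * ENNReal.ofReal (Real.exp (-(t * a))) := step2
    _ = ENNReal.ofReal (Real.exp (vseq l t r - t * a)) := by
        rw [← ENNReal.ofReal_mul (Real.exp_nonneg _), ← Real.exp_add]
        ring_nf
    _ ≤ ENNReal.ofReal (Real.exp (-M * r)) :=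
        ENNReal.ofReal_le_ofReal (Real.exp_le_exp.mpr hfin)
end

section
/- Fix λ > 0. Let (Z_n)_{n≥0} and (Z′_n)_{n≥0} be two independent Galton–Watson processes, each with Poisson(λ) offspring distribution. Then P(Z_n = Z′_n and Z_n ≥ 1 for all n ≥ 1) = 0. -/
open MeasureTheory ProbabilityTheory
open scoped ENNReal

lemma stmt9_measurable_sum_range {Ω : Type*} [m0 : MeasurableSpace Ω]
    {g : Ω → ℕ} {h : ℕ → Ω → ℕ} (hg : Measurable g)
    (hh : ∀ i, Measurable (h i)) :
    Measurable (fun ω => ∑ i ∈ Finset.range (g ω), h i ω) := by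
  apply measurable_to_countable'
  intro k
  have heq : (fun ω => ∑ i ∈ Finset.range (g ω), h i ω) ⁻¹' {k}
      = ⋃ m, (g ⁻¹' {m} ∩ (fun ω => ∑ i ∈ Finset.range m, h i ω) ⁻¹' {k}) := by
    ext ω
    simp only [Set.mem_preimage, Set.mem_singleton_iff, Set.mem_iUnion, Set.mem_inter_iff]
    constructor
    · intro hk; exact ⟨g ω, rfl, hk⟩
    · rintro ⟨m, hm, hk⟩; rw [hm]; exact hk
  rw [heq]
  exact MeasurableSet.iUnion fun m =>
    (hg (measurableSet_singleton m)).inter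
      ((Finset.measurable_sum _ fun i _ => hh i) (measurableSet_singleton k))


def stmt9_sigma {Ω : Type*} (ξ : Bool → ℕ → ℕ → Ω → ℕ) (S : Set (Bool × ℕ × ℕ)) :
    MeasurableSpace Ω :=
  ⨆ q ∈ S, MeasurableSpace.comap (fun ω => ξ q.1 q.2.1 q.2.2 ω) inferInstance

/-- Fix `λ > 0`. Let `(Z_n)` and `(Z′_n)` be two independent Galton–Watson processes,
each with Poisson(λ) offspring distribution (built from two independent i.i.d. arrays,
all variables mutually independent). Then
`P(Z_n = Z′_n and Z_n ≥ 1 for all n ≥ 1) = 0`. -/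
theorem stmt_9 (l : ℝ) (hl : 0 < l)
    (Ω : Type*) [MeasurableSpace Ω] (P : Measure Ω) [IsProbabilityMeasure P]
    (ξ : Bool → ℕ → ℕ → Ω → ℕ) (Z Z' : ℕ → Ω → ℕ)
    (hmeas : ∀ b ℓ i, Measurable (ξ b ℓ i))
    (hind : iIndepFun
      (fun q : Bool × ℕ × ℕ => ξ q.1 q.2.1 q.2.2) P)
    (hdist : ∀ b ℓ i k, P {ω | ξ b ℓ i ω = k}
        = ENNReal.ofReal (l ^ k * Real.exp (-l) / (Nat.factorial k)))
    (hZ0 : ∀ ω, Z 0 ω = 1) (hZ'0 : ∀ ω, Z' 0 ω = 1)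
    (hZrec : ∀ ℓ ω, Z (ℓ + 1) ω = ∑ i ∈ Finset.range (Z ℓ ω), ξ true ℓ i ω)
    (hZ'rec : ∀ ℓ ω, Z' (ℓ + 1) ω = ∑ i ∈ Finset.range (Z' ℓ ω), ξ false ℓ i ω) :
    P {ω | ∀ n : ℕ, 1 ≤ n → Z n ω = Z' n ω ∧ 1 ≤ Z n ω} = 0 := by
  classical
  have hp : ∀ k : ℕ, (0:ℝ) < l ^ k * Real.exp (-l) / (Nat.factorial k) := by
    intro k
    have := Nat.factorial_pos k
    positivity
  set ε : ℝ := min (l ^ 0 * Real.exp (-l) / (Nat.factorial 0))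
      (l ^ 1 * Real.exp (-l) / (Nat.factorial 1)) with hε
  have hεpos : 0 < ε := lt_min (hp 0) (hp 1)
  set c : ℝ≥0∞ := 1 - ENNReal.ofReal ε with hc
  have hc1 : c < 1 := by
    refine ENNReal.sub_lt_self ENNReal.one_ne_top one_ne_zero ?_
    simp [ENNReal.ofReal_pos.2 hεpos, (ENNReal.ofReal_pos.2 hεpos).ne']
  have hbound : ∀ b ℓ i k, P {ω | ξ b ℓ i ω = k} ≤ c := by
    intro b ℓ i k
    obtain ⟨j, hjk, hjε⟩ : ∃ j, j ≠ k ∧ ε ≤ l ^ j * Real.exp (-l) / (Nat.factorial j) := by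
      rcases eq_or_ne k 0 with rfl | hk
      · exact ⟨1, one_ne_zero, min_le_right _ _⟩
      · exact ⟨0, Ne.symm hk, min_le_left _ _⟩
    have hsub : {ω | ξ b ℓ i ω = k} ⊆ {ω | ξ b ℓ i ω = j}ᶜ := by
      intro ω hω hω'
      exact hjk ((Set.mem_setOf_eq ▸ hω').symm.trans hω)
    have hms : MeasurableSet {ω | ξ b ℓ i ω = j} :=
      (hmeas b ℓ i) (measurableSet_singleton j)
    calc P {ω | ξ b ℓ i ω = k} ≤ P ({ω | ξ b ℓ i ω = j}ᶜ) := measure_mono hsub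
      _ = 1 - P {ω | ξ b ℓ i ω = j} := prob_compl_eq_one_sub hms
      _ ≤ c := by
          rw [hdist b ℓ i j]
          exact tsub_le_tsub_left (ENNReal.ofReal_le_ofReal hjε) 1
  set A : ℕ → Set Ω := fun n => {ω | ∀ m, 1 ≤ m → m ≤ n → Z m ω = Z' m ω ∧ 1 ≤ Z m ω}
    with hA
  have hZpos : ∀ n ω, ω ∈ A n → 1 ≤ Z n ω := by
    intro n ω hω
    rcases Nat.eq_zero_or_pos n with rfl | hn
    · exact (hZ0 ω).ge
    · exact (hω n hn le_rfl).2
  have key : ∀ n, P (A (n+1)) ≤ c * P (A n) := by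
    intro n
    set q0 : Bool × ℕ × ℕ := (true, n, 0) with hq0
    have hFle : stmt9_sigma ξ ({q0}ᶜ) ≤ (inferInstance : MeasurableSpace Ω) := by
      refine iSup_le fun q => iSup_le fun _ => ?_
      exact measurable_iff_comap_le.1 (hmeas q.1 q.2.1 q.2.2)
    have hξF : ∀ q : Bool × ℕ × ℕ, q ≠ q0 →
        Measurable[stmt9_sigma ξ ({q0}ᶜ)] (ξ q.1 q.2.1 q.2.2) := by
      intro q hq
      refine measurable_iff_comap_le.2 ?_
      exact le_iSup₂ (f := fun (q : Bool × ℕ × ℕ) (_ : q ∈ ({q0}ᶜ : Set (Bool × ℕ × ℕ))) =>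
        MeasurableSpace.comap (fun ω => ξ q.1 q.2.1 q.2.2 ω) inferInstance) q hq
    have hZF : ∀ m, m ≤ n → Measurable[stmt9_sigma ξ ({q0}ᶜ)] (Z m) := by
      intro m hm
      induction m with
      | zero =>
        have : Z 0 = fun _ => 1 := funext hZ0
        rw [this]; exact measurable_const
      | succ m ih =>
        have hm' : m ≤ n := (Nat.lt_of_succ_le hm).le
        have hZs : Z (m+1) = fun ω => ∑ i ∈ Finset.range (Z m ω), ξ true m i ω :=
          funext fun ω => hZrec m ω
        rw [hZs]
        refine stmt9_measurable_sum_range (m0 := stmt9_sigma ξ ({q0}ᶜ)) (ih hm') fun i => ?_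
        refine hξF (true, m, i) ?_
        intro hcontra
        rw [hq0, Prod.ext_iff, Prod.ext_iff] at hcontra
        exact absurd hcontra.2.1 (by simpa using Nat.ne_of_lt (Nat.lt_of_succ_le hm))
    have hZ'F : ∀ m, m ≤ n + 1 → Measurable[stmt9_sigma ξ ({q0}ᶜ)] (Z' m) := by
      intro m hm
      induction m with
      | zero =>
        have : Z' 0 = fun _ => 1 := funext hZ'0
        rw [this]; exact measurable_const
      | succ m ih =>
        have hm' : m ≤ n + 1 := (Nat.lt_of_succ_le hm).le
        have hZs : Z' (m+1) = fun ω => ∑ i ∈ Finset.range (Z' m ω), ξ false m i ω :=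
          funext fun ω => hZ'rec m ω
        rw [hZs]
        refine stmt9_measurable_sum_range (m0 := stmt9_sigma ξ ({q0}ᶜ)) (ih hm') fun i => ?_
        refine hξF (false, m, i) ?_
        intro hcontra
        rw [hq0, Prod.ext_iff] at hcontra
        exact Bool.false_ne_true hcontra.1
    set T : Ω → ℕ := fun ω => ∑ i ∈ Finset.range (Z n ω),
        (if i = 0 then 0 else ξ true n i ω) with hT
    have hTF : Measurable[stmt9_sigma ξ ({q0}ᶜ)] T := by
      refine stmt9_measurable_sum_range (m0 := stmt9_sigma ξ ({q0}ᶜ)) (hZF n le_rfl) fun i => ?_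
      by_cases hi : i = 0
      · simp only [hi, if_pos rfl]; exact measurable_const
      · simp only [if_neg hi]
        exact hξF (true, n, i) (by
          intro hcontra
          rw [hq0, Prod.ext_iff, Prod.ext_iff] at hcontra
          exact hi hcontra.2.2)
    have hsplit : ∀ ω, 1 ≤ Z n ω → Z (n+1) ω = ξ true n 0 ω + T ω := by
      intro ω hω
      rw [hZrec]
      have hterm : ∀ i ∈ Finset.range (Z n ω), ξ true n i ω
          = (if i = 0 then ξ true n 0 ω else 0) + (if i = 0 then 0 else ξ true n i ω) := by
        intro i _
        by_cases hi : i = 0 <;> simp [hi]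
      rw [Finset.sum_congr rfl hterm, Finset.sum_add_distrib]
      congr 1
      rw [Finset.sum_ite_eq' (Finset.range (Z n ω)) 0 (fun _ => ξ true n 0 ω)]
      simp [Finset.mem_range, Nat.lt_of_lt_of_le Nat.zero_lt_one hω]
    set D : ℕ → Set Ω := fun k => A n ∩ {ω | k + T ω = Z' (n+1) ω} with hD
    have hAnF : MeasurableSet[stmt9_sigma ξ ({q0}ᶜ)] (A n) := by
      have hAeq : A n = ⋂ m, ⋂ (_ : 1 ≤ m), ⋂ (_ : m ≤ n),
          ({ω | Z m ω = Z' m ω} ∩ {ω | 1 ≤ Z m ω}) := by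
        ext ω
        simp only [hA, Set.mem_setOf_eq, Set.mem_iInter, Set.mem_inter_iff]
      rw [hAeq]
      refine MeasurableSet.iInter fun m => MeasurableSet.iInter fun _ =>
        MeasurableSet.iInter fun h2 => MeasurableSet.inter ?_ ?_
      · exact measurableSet_eq_fun (hZF m h2) (hZ'F m (h2.trans (Nat.le_succ n)))
      · have : {ω | 1 ≤ Z m ω} = (Z m) ⁻¹' ({0}ᶜ) := by
          ext ω; simp [Nat.one_le_iff_ne_zero]
        rw [this]
        exact hZF m h2 (measurableSet_singleton 0).compl
    have hDF : ∀ k, MeasurableSet[stmt9_sigma ξ ({q0}ᶜ)] (D k) := by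
      intro k
      refine hAnF.inter ?_
      exact measurableSet_eq_fun (measurable_const.add hTF) (hZ'F (n+1) le_rfl)
    have hindep : Indep (stmt9_sigma ξ ({q0}ᶜ)) (stmt9_sigma ξ {q0}) P := by
      refine indep_iSup_of_disjoint ?_ hind.iIndep disjoint_compl_left
      exact fun q => measurable_iff_comap_le.1 (hmeas q.1 q.2.1 q.2.2)
    have hGE : ∀ k, MeasurableSet[stmt9_sigma ξ {q0}] ((ξ true n 0) ⁻¹' {k}) := by
      intro k
      have hle : MeasurableSpace.comap (fun ω => ξ q0.1 q0.2.1 q0.2.2 ω) inferInstance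
          ≤ stmt9_sigma ξ {q0} :=
        le_iSup₂ (f := fun (q : Bool × ℕ × ℕ) (_ : q ∈ ({q0} : Set (Bool × ℕ × ℕ))) =>
          MeasurableSpace.comap (fun ω => ξ q.1 q.2.1 q.2.2 ω) inferInstance) q0 rfl
      exact hle _ ⟨{k}, trivial, rfl⟩
    have hprod := (Indep_iff _ _ _).1 hindep
    have hsub : A (n+1) ⊆ ⋃ k, (D k ∩ (ξ true n 0) ⁻¹' {k}) := by
      intro ω hω
      have hωn : ω ∈ A n := fun m h1 h2 => hω m h1 (h2.trans (Nat.le_succ n))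
      have h1 : 1 ≤ Z n ω := hZpos n ω hωn
      have h2 : Z (n+1) ω = Z' (n+1) ω := (hω (n+1) (Nat.succ_le_succ (Nat.zero_le n)) le_rfl).1
      refine Set.mem_iUnion.2 ⟨ξ true n 0 ω, ⟨hωn, ?_⟩, rfl⟩
      show ξ true n 0 ω + T ω = Z' (n+1) ω
      rw [← hsplit ω h1, h2]
    have hdisj : Pairwise (Function.onFun Disjoint D) := by
      intro k k' hkk'
      refine Set.disjoint_left.2 ?_
      rintro ω ⟨-, h1⟩ ⟨-, h2⟩
      simp only [Set.mem_setOf_eq] at h1 h2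
      exact hkk' (by omega)
    calc P (A (n+1)) ≤ P (⋃ k, D k ∩ (ξ true n 0) ⁻¹' {k}) := measure_mono hsub
      _ ≤ ∑' k, P (D k ∩ (ξ true n 0) ⁻¹' {k}) := measure_iUnion_le _
      _ = ∑' k, P (D k) * P ((ξ true n 0) ⁻¹' {k}) :=
          tsum_congr fun k => hprod _ _ (hDF k) (hGE k)
      _ ≤ ∑' k, P (D k) * c :=
          ENNReal.tsum_le_tsum fun k => mul_le_mul_right (hbound true n 0 k) _
      _ = (∑' k, P (D k)) * c := ENNReal.tsum_mul_right
      _ ≤ P (A n) * c := by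
          refine mul_le_mul_left ?_ c
          rw [← measure_iUnion hdisj (fun k => hFle _ (hDF k))]
          exact measure_mono (Set.iUnion_subset fun k => Set.inter_subset_left)
      _ = c * P (A n) := mul_comm _ _
  have hAn : ∀ n, P (A n) ≤ c ^ n := by
    intro n
    induction n with
    | zero => simpa using prob_le_one
    | succ n ih =>
      calc P (A (n+1)) ≤ c * P (A n) := key n
        _ ≤ c * c ^ n := mul_le_mul_right ih c
        _ = c ^ (n+1) := by rw [pow_succ, mul_comm]
  have hsubA : ∀ n, {ω | ∀ m : ℕ, 1 ≤ m → Z m ω = Z' m ω ∧ 1 ≤ Z m ω} ⊆ A n :=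
    fun n ω hω m h1 _ => hω m h1
  have hle : ∀ n, P {ω | ∀ m : ℕ, 1 ≤ m → Z m ω = Z' m ω ∧ 1 ≤ Z m ω} ≤ c ^ n :=
    fun n => (measure_mono (hsubA n)).trans (hAn n)
  have htend : Filter.Tendsto (fun n => c ^ n) Filter.atTop (nhds 0) :=
    ENNReal.tendsto_pow_atTop_nhds_zero_of_lt_one hc1
  exact le_antisymm (ge_of_tendsto' htend hle) zero_le
end

section
/- Let G be a connected simple graph on a vertex set V, and let v, w ∈ V be joined by a walk in G all of whose edges are bridges of G (i.e., v and w lie in a common bridging-tree). Then there is exactly one path in G from v to w: a path exists, and any two paths in G from v to w are equal. -/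
private lemma key_bridge_path {V : Type*} {G : SimpleGraph V} :
    ∀ {v w : V} (p : G.Walk v w), p.IsPath → (∀ e ∈ p.edges, G.IsBridge e) →
      ∀ q : G.Walk v w, q.IsPath → q = p := by
  intro v w p
  induction p with
  | nil =>
    intro _ _ q hq
    exact SimpleGraph.Walk.isPath_iff_eq_nil.mp hq
  | @cons v u w hvu p' ih =>
    intro hp hb q hq
    have he : G.IsBridge s(v, u) := hb _ (by simp)
    have hforall := (SimpleGraph.isBridge_iff_adj_and_forall_walk_mem_edges.mp he)
    have hmem : s(v, u) ∈ (q.append p'.reverse).edges := hforall _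
    rw [SimpleGraph.Walk.edges_append, List.mem_append] at hmem
    have hnot : s(v, u) ∉ p'.edges := by
      have := hp.2  -- ?
      have hnd := hp.edges_nodup
      simp only [SimpleGraph.Walk.edges_cons, List.nodup_cons] at hnd
      exact hnd.1
    have hq_mem : s(v, u) ∈ q.edges := by
      rcases hmem with h1 | h2
      · exact h1
      · rw [SimpleGraph.Walk.edges_reverse, List.mem_reverse] at h2
        exact absurd h2 hnot
    -- q must be a cons
    cases q with
    | nil => simp at hq_mem
    | @cons _ x _ hvx q'' =>
      rw [SimpleGraph.Walk.edges_cons, List.mem_cons] at hq_mem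
      rw [SimpleGraph.Walk.cons_isPath_iff] at hq hp
      have hxu : x = u := by
        rcases hq_mem with h1 | h2
        · rcases Sym2.eq_iff.mp h1 with ⟨_, h⟩ | ⟨h, _⟩
          · exact h.symm
          · exact absurd h (G.ne_of_adj hvx)
        · exact absurd (q''.fst_mem_support_of_mem_edges h2) hq.2
      subst hxu
      have := ih hp.1 (fun e heq => hb e (by simp [heq])) q'' hq.1
      rw [this]

/-- Let `G` be a connected simple graph and let `v, w` be joined by a walk all of whose
edges are bridges of `G` (i.e. `v` and `w` lie in a common bridging-tree). Then there is
exactly one path in `G` from `v` to `w`: a path exists, and any two paths from `v` to `w`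
are equal. -/
theorem stmt_11 {V : Type*} (G : SimpleGraph V) (hG : G.Connected) (v w : V)
    (h : ∃ p : G.Walk v w, ∀ e ∈ p.edges, G.IsBridge e) :
    (∃ p : G.Walk v w, p.IsPath) ∧
      ∀ p q : G.Walk v w, p.IsPath → q.IsPath → p = q := by
  classical
  obtain ⟨p0, hb⟩ := h
  have hbp : ∀ e ∈ (p0.toPath : G.Walk v w).edges, G.IsBridge e :=
    fun e he => hb e (SimpleGraph.Walk.edges_toPath_subset p0 he)
  refine ⟨⟨p0.toPath, p0.toPath.2⟩, fun p q hp hq => ?_⟩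
  rw [key_bridge_path _ p0.toPath.2 hbp p hp, key_bridge_path _ p0.toPath.2 hbp q hq]
end

section
/- Let G be a connected simple graph, let v, w be joined by a walk in G all of whose edges are bridges of G, and let p be the unique path in G from v to w. Then for every vertex y on p (i.e., y in the support of p), there is no vertex u admitting both a walk in G from u to v whose support does not contain y and a walk in G from u to w whose support does not contain y. -/
open SimpleGraph

/-- If `p` is a path from `v` to `w` all of whose edges are bridges, then any path `q`
from `v` to `w` equals `p`. -/
private lemma bridge_path_unique {V : Type*} {G : SimpleGraph V} {v w : V}
    (p : G.Walk v w) (hp : p.IsPath) (hb : ∀ e ∈ p.edges, G.IsBridge e)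
    (q : G.Walk v w) (hq : q.IsPath) : q = p := by
  induction p with
  | nil =>
    exact Walk.isPath_iff_eq_nil.mp hq
  | cons ph p ih =>
    have h := hb _ (by rw [Walk.edges_cons]; exact List.mem_cons_self)
    rw [isBridge_iff_adj_and_forall_walk_mem_edges] at h
    replace h := h (q.append p.reverse)
    simp only [Walk.edges_append, Walk.edges_reverse, List.mem_append, List.mem_reverse] at h
    have hb' : ∀ e ∈ p.edges, G.IsBridge e := fun e he => hb e (by simp [he])
    cases' h with h h
    · cases q with
      | nil => simp [Walk.isPath_def] at hp
      | cons _ q =>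
        rw [Walk.cons_isPath_iff] at hp hq
        simp only [Walk.edges_cons, List.mem_cons, Sym2.eq_iff, true_and] at h
        rcases h with (⟨h, rfl⟩ | ⟨rfl, rfl⟩) | h
        · cases ih hp.1 hb' q hq.1
          rfl
        · simp at hq
        · exact absurd (Walk.fst_mem_support_of_mem_edges _ h) hq.2
    · rw [Walk.cons_isPath_iff] at hp
      exact absurd (Walk.fst_mem_support_of_mem_edges _ h) hp.2

/-- Let `G` be a connected simple graph, let `v, w` be joined by a walk all of whose
edges are bridges of `G`, and let `p` be the (unique) path in `G` from `v` to `w`.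
Then for every vertex `y` on `p`, there is no vertex `u` admitting both a walk from `u`
to `v` whose support does not contain `y` and a walk from `u` to `w` whose support does
not contain `y`. -/
theorem stmt_12 {V : Type*} (G : SimpleGraph V) (hG : G.Connected) (v w : V)
    (h : ∃ q : G.Walk v w, ∀ e ∈ q.edges, G.IsBridge e)
    (p : G.Walk v w) (hp : p.IsPath) :
    ∀ y ∈ p.support,
      ¬ ∃ u : V, (∃ q : G.Walk u v, y ∉ q.support) ∧ (∃ q' : G.Walk u w, y ∉ q'.support) := by
  classical
  obtain ⟨q, hq⟩ := h
  -- the path extracted from q has all edges bridges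
  have hbp : ∀ e ∈ (q.toPath : G.Walk v w).edges, G.IsBridge e :=
    fun e he => hq e (Walk.edges_toPath_subset q he)
  have hpeq : p = (q.toPath : G.Walk v w) :=
    bridge_path_unique _ q.toPath.2 hbp p hp
  rintro y hy ⟨u, ⟨r1, hr1⟩, ⟨r2, hr2⟩⟩
  -- build a walk from v to w avoiding y
  set r : G.Walk v w := r1.reverse.append r2 with hr
  have hyr : y ∉ r.support := by
    intro hmem
    rw [Walk.mem_support_append_iff] at hmem
    rcases hmem with hmem | hmem
    · exact hr1 (by simpa using hmem)
    · exact hr2 hmem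
  -- but r.toPath is a path from v to w, hence equals p, whose support contains y
  have : (r.toPath : G.Walk v w) = (q.toPath : G.Walk v w) :=
    bridge_path_unique _ q.toPath.2 hbp _ r.toPath.2
  have hy' : y ∈ (r.toPath : G.Walk v w).support := by
    rw [this, ← hpeq]; exact hy
  exact hyr (Walk.support_toPath_subset r hy')
end

section
/- Let G be a connected simple graph, let T be the vertex set of a bridging-tree of G (a connected component of the spanning subgraph of bridges), and let E_T be the set of bridge edges of G having both endpoints in T. Then for any two distinct vertices u₁ ≠ u₂ in T, there is no vertex z admitting both a walk in G from z to u₁ using no edge of E_T and a walk in G from z to u₂ using no edge of E_T. (Equivalently, the components G_{u₁} and G_{u₂} of u₁ and u₂ in the subgraph induced by the edges E(G) ∖ E_T intersect only within {u₁} and {u₂} respectively, so they are disjoint.) -/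
/-- Let `G` be a connected simple graph, let `T` be the vertex set of a bridging-tree of
`G` (the set of vertices joined to a fixed vertex `t` by a walk all of whose edges are
bridges), and let `E_T` be the set of bridge edges of `G` with both endpoints in `T`.
Then for any two distinct `u₁ ≠ u₂` in `T`, there is no vertex `z` admitting both a walk
from `z` to `u₁` using no edge of `E_T` and a walk from `z` to `u₂` using no edge of
`E_T`. -/
theorem stmt_14 {V : Type*} (G : SimpleGraph V) (hG : G.Connected) (t : V)
    (T : Set V)
    (hT : T = {x : V | ∃ p : G.Walk x t, ∀ e ∈ p.edges, G.IsBridge e})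
    (ET : Set (Sym2 V))
    (hET : ET = {e : Sym2 V | G.IsBridge e ∧ ∀ x ∈ e, x ∈ T})
    (u₁ u₂ : V) (h₁ : u₁ ∈ T) (h₂ : u₂ ∈ T) (hne : u₁ ≠ u₂) :
    ¬ ∃ z : V, (∃ p : G.Walk z u₁, ∀ e ∈ p.edges, e ∉ ET) ∧
        (∃ q : G.Walk z u₂, ∀ e ∈ q.edges, e ∉ ET) := by
  classical
  rintro ⟨z, ⟨p, hp⟩, ⟨q, hq⟩⟩
  -- a walk from u₁ to u₂ avoiding ET
  set r : G.Walk u₁ u₂ := p.reverse.append q with hr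
  have hrET : ∀ e ∈ r.edges, e ∉ ET := by
    intro e he
    rw [hr, SimpleGraph.Walk.edges_append, List.mem_append] at he
    rcases he with he | he
    · exact hp e (by simpa [SimpleGraph.Walk.edges_reverse] using he)
    · exact hq e he
  -- bridge walks to t
  rw [hT] at h₁ h₂
  obtain ⟨p₁, hp₁⟩ := h₁
  obtain ⟨p₂, hp₂⟩ := h₂
  -- the bridge walk from u₁ to u₂
  set w : G.Walk u₁ u₂ := p₁.append p₂.reverse with hw
  -- all vertices of w are in T
  have hsup : ∀ x ∈ w.support, x ∈ T := by
    intro x hx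
    rw [hw, SimpleGraph.Walk.mem_support_append_iff] at hx
    rw [hT]
    rcases hx with hx | hx
    · exact ⟨p₁.dropUntil x hx, fun e he =>
        hp₁ e (SimpleGraph.Walk.edges_dropUntil_subset p₁ hx he)⟩
    · rw [SimpleGraph.Walk.support_reverse, List.mem_reverse] at hx
      exact ⟨p₂.dropUntil x hx, fun e he =>
        hp₂ e (SimpleGraph.Walk.edges_dropUntil_subset p₂ hx he)⟩
  have hwbr : ∀ e ∈ w.edges, G.IsBridge e := by
    intro e he
    rw [hw, SimpleGraph.Walk.edges_append, List.mem_append] at he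
    rcases he with he | he
    · exact hp₁ e he
    · exact hp₂ e (by simpa [SimpleGraph.Walk.edges_reverse] using he)
  -- the bridge path from u₁ to u₂
  set π : G.Walk u₁ u₂ := w.bypass with hπ
  have hπpath : π.IsPath := w.bypass_isPath
  have hπET : ∀ e ∈ π.edges, e ∈ ET := by
    intro e he
    have heW : e ∈ w.edges := w.edges_bypass_subset he
    rw [hET]
    refine ⟨hwbr e heW, ?_⟩
    intro x hx
    induction e using Sym2.ind with
    | _ a b =>
      rcases Sym2.mem_iff.mp hx with rfl | rfl
      · exact hsup x (w.fst_mem_support_of_mem_edges heW)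
      · exact hsup x (w.snd_mem_support_of_mem_edges heW)
  -- π is nonempty
  cases hπc : π with
  | nil => exact hne rfl
  | cons hadj tail =>
    rename_i v
    have hecons : π.edges = s(u₁, v) :: tail.edges := by rw [hπc]; rfl
    have heET : s(u₁, v) ∈ ET := hπET _ (by rw [hecons]; exact List.mem_cons_self)
    have hbr : G.IsBridge s(u₁, v) := by rw [hET] at heET; exact heET.1
    -- tail avoids s(u₁, v) since π is a path
    have htail : s(u₁, v) ∉ tail.edges := by
      have := hπpath.edges_nodup
      rw [hecons] at this
      exact (List.nodup_cons.mp this).1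
    -- walk from u₁ to v avoiding the edge: r then tail.reverse
    set s : G.Walk u₁ v := r.append tail.reverse with hs
    have hse : s(u₁, v) ∉ s.edges := by
      rw [hs, SimpleGraph.Walk.edges_append, List.mem_append]
      rintro (h | h)
      · exact hrET _ h heET
      · exact htail (by simpa [SimpleGraph.Walk.edges_reverse] using h)
    rw [SimpleGraph.isBridge_iff] at hbr
    exact hbr (SimpleGraph.reachable_delete_edges_iff_exists_walk.mpr ⟨s, hse⟩)
end

section
/- Let G be a finite connected simple graph on a nonempty vertex set and let r ≥ 1 be an integer. Suppose that for every vertex v of G there exists a vertex w with graph distance dist_G(v, w) ≥ r. Then G contains a path of length at least 2r − 2 (i.e., there exist vertices a, b and a path in G from a to b with at least 2r − 2 edges). -/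
open SimpleGraph

private lemma aux_dist_getVert {V : Type*} {G : SimpleGraph V} (hG : G.Connected)
    {u v : V} (p : G.Walk u v) (i j : ℕ) (hij : i ≤ j) (hj : j ≤ p.length) :
    G.dist (p.getVert i) (p.getVert j) ≤ j - i := by
  induction j, hij using Nat.le_induction with
  | base => simp
  | succ j hij ih =>
    have h1 : G.dist (p.getVert i) (p.getVert j) ≤ j - i := ih (by omega)
    have h2 : G.Adj (p.getVert j) (p.getVert (j + 1)) := p.adj_getVert_succ (by omega)
    have h3 : G.dist (p.getVert j) (p.getVert (j + 1)) ≤ 1 := by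
      simpa using SimpleGraph.dist_le h2.toWalk
    calc G.dist (p.getVert i) (p.getVert (j + 1))
        ≤ G.dist (p.getVert i) (p.getVert j) + G.dist (p.getVert j) (p.getVert (j+1)) :=
          hG.dist_triangle
      _ ≤ (j - i) + 1 := Nat.add_le_add h1 h3
      _ ≤ (j + 1) - i := by omega

private lemma aux_first_hit {V : Type*} {G : SimpleGraph V} {a b : V} (P : G.Walk a b) :
    ∀ {z m : V} (S : G.Walk z m), S.IsPath → m ∈ P.support →
    ∃ (c : V) (_ : c ∈ P.support) (S1 : G.Walk z c), S1.IsPath ∧ S1.length ≤ S.length ∧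
      S1.support ⊆ S.support ∧ ∀ x ∈ S1.support, x ∈ P.support → x = c := by
  intro z m S
  induction S with
  | nil =>
    intro _ hm
    exact ⟨_, hm, SimpleGraph.Walk.nil, SimpleGraph.Walk.IsPath.nil, le_refl _,
      by simp, by simp⟩
  | @cons u x m hadj q ih =>
    intro hS hm
    by_cases hu : u ∈ P.support
    · exact ⟨u, hu, SimpleGraph.Walk.nil, SimpleGraph.Walk.IsPath.nil, by simp,
        by simp, by simp⟩
    · obtain ⟨c, hc, S1, hS1, hlen, hsub, hkey⟩ := ih hS.of_cons hm
      have hune : u ∉ q.support := ((SimpleGraph.Walk.cons_isPath_iff _ _).mp hS).2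
      refine ⟨c, hc, SimpleGraph.Walk.cons hadj S1, ?_, by simpa using hlen, ?_, ?_⟩
      · exact (SimpleGraph.Walk.cons_isPath_iff _ _).mpr ⟨hS1, fun hmem => hune (hsub hmem)⟩
      · intro y hy
        rw [SimpleGraph.Walk.support_cons, List.mem_cons] at hy
        rcases hy with rfl | hy
        · simp
        · exact List.mem_cons_of_mem _ (hsub hy)
      · intro y hy hyP
        rw [SimpleGraph.Walk.support_cons, List.mem_cons] at hy
        rcases hy with rfl | hy
        · exact absurd hyP hu
        · exact hkey y hy hyP

private lemma aux_glue {V : Type*} {G : SimpleGraph V} {a b x c z : V} {P : G.Walk a b}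
    (T : G.Walk x c) (S1 : G.Walk z c) (hT : T.IsPath) (hS1 : S1.IsPath)
    (hsub : T.support ⊆ P.support)
    (hkey : ∀ y ∈ S1.support, y ∈ P.support → y = c) :
    (T.append S1.reverse).IsPath := by
  rw [SimpleGraph.Walk.isPath_def, SimpleGraph.Walk.support_append]
  have hrev : S1.reverse.support = S1.support.reverse := SimpleGraph.Walk.support_reverse _
  have hnodup_rev : S1.reverse.support.Nodup := by
    rw [hrev]; exact List.nodup_reverse.mpr hS1.support_nodup
  have hhead : S1.reverse.support = c :: S1.reverse.support.tail :=
    SimpleGraph.Walk.support_eq_cons _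
  refine List.Nodup.append hT.support_nodup (hnodup_rev.tail) ?_
  intro y hyT hytail
  have hyS : y ∈ S1.support := by
    have : y ∈ S1.reverse.support := List.tail_subset _ hytail
    rw [hrev, List.mem_reverse] at this
    exact this
  have hyc : y = c := hkey y hyS (hsub hyT)
  have : c ∉ S1.reverse.support.tail := by
    have := hnodup_rev
    rw [hhead] at this
    exact (List.nodup_cons.mp this).1
  exact this (hyc ▸ hytail)

/-- Let `G` be a finite connected simple graph on a nonempty vertex set and let `r ≥ 1`.
Suppose every vertex `v` has some vertex `w` at graph distance at least `r` from it.
Then `G` contains a path of length at least `2r − 2`. -/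
theorem stmt_15 {V : Type*} [Fintype V] [Nonempty V] (G : SimpleGraph V)
    (hG : G.Connected) (r : ℕ) (hr : 1 ≤ r)
    (h : ∀ v : V, ∃ w : V, r ≤ G.dist v w) :
    ∃ (a b : V) (p : G.Walk a b), p.IsPath ∧ 2 * r - 2 ≤ p.length := by
  classical
  set A : Set ℕ := {n | ∃ (a b : V) (p : G.Walk a b), p.IsPath ∧ p.length = n} with hA
  have hne : A.Nonempty := by
    obtain ⟨v⟩ := ‹Nonempty V›
    exact ⟨0, v, v, SimpleGraph.Walk.nil, SimpleGraph.Walk.IsPath.nil, rfl⟩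
  have hbdd : BddAbove A := by
    refine ⟨Fintype.card V, fun n hn => ?_⟩
    obtain ⟨a, b, p, hp, rfl⟩ := hn
    exact le_of_lt hp.length_lt
  set L := sSup A with hLdef
  obtain ⟨a, b, P, hP, hlen⟩ := Nat.sSup_mem hne hbdd
  have hmax : ∀ {x y : V} (q : G.Walk x y), q.IsPath → q.length ≤ L := by
    intro x y q hq
    exact le_csSup hbdd ⟨x, y, q, hq, rfl⟩
  -- the midpoint of P
  set k := L / 2 with hk
  have hkL : k ≤ L := Nat.div_le_self _ _
  set m := P.getVert k with hm
  have hmP : m ∈ P.support :=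
    SimpleGraph.Walk.mem_support_iff_exists_getVert.mpr ⟨k, rfl, by omega⟩
  obtain ⟨z, hz⟩ := h m
  -- a path from z to m
  obtain ⟨S0⟩ := hG.preconnected z m
  have hSpath : S0.bypass.IsPath := SimpleGraph.Walk.bypass_isPath S0
  obtain ⟨c, hc, S1, hS1, _, _, hkey⟩ := aux_first_hit P S0.bypass hSpath hmP
  set t1 := (P.takeUntil c hc).length with ht1
  set t2 := (P.dropUntil c hc).length with ht2
  have htsum : t1 + t2 = L := by
    have := congrArg SimpleGraph.Walk.length (P.take_spec hc)
    rw [SimpleGraph.Walk.length_append] at this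
    omega
  have hcgv : P.getVert t1 = c := by
    conv_lhs => rw [← P.take_spec hc]
    rw [SimpleGraph.Walk.getVert_append]
    simp [ht1]
  -- gluing gives two paths, bounding S1.length
  have hW1 : ((P.takeUntil c hc).append S1.reverse).IsPath :=
    aux_glue _ _ (hP.takeUntil hc) hS1 (P.support_takeUntil_subset hc) hkey
  have hW2 : ((P.dropUntil c hc).reverse.append S1.reverse).IsPath := by
    refine aux_glue _ _ (hP.dropUntil hc).reverse hS1 ?_ hkey
    intro y hy
    rw [SimpleGraph.Walk.support_reverse, List.mem_reverse] at hy
    exact P.support_dropUntil_subset hc hy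
  have hb1 : t1 + S1.length ≤ L := by
    have := hmax _ hW1
    rwa [SimpleGraph.Walk.length_append, SimpleGraph.Walk.length_reverse] at this
  have hb2 : t2 + S1.length ≤ L := by
    have := hmax _ hW2
    rwa [SimpleGraph.Walk.length_append, SimpleGraph.Walk.length_reverse,
      SimpleGraph.Walk.length_reverse] at this
  -- distance estimates
  have hdcz : G.dist c z ≤ S1.length := by
    have := SimpleGraph.dist_le S1.reverse
    rwa [SimpleGraph.Walk.length_reverse] at this
  have htri : G.dist m z ≤ G.dist m c + G.dist c z := hG.dist_triangle
  have ht1L : t1 ≤ L := by omega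
  have hkey2 : r ≤ G.dist m c + S1.length := le_trans hz (le_trans htri (by omega))
  rcases le_or_gt t1 k with hcase | hcase
  · have hd : G.dist m c ≤ k - t1 := by
      have := aux_dist_getVert hG P t1 k hcase (by omega)
      rw [hcgv, ← hm] at this
      rwa [SimpleGraph.dist_comm]
    refine ⟨a, b, P, hP, ?_⟩
    have : r ≤ k := by omega
    omega
  · have hd : G.dist m c ≤ t1 - k := by
      have := aux_dist_getVert hG P k t1 (le_of_lt hcase) (by omega)
      rwa [hcgv, ← hm] at this
    refine ⟨a, b, P, hP, ?_⟩
    have : r ≤ t1 - k + t2 := by omega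
    omega
end
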